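/- arXiv:1905.08467 — 5 statements merged into one kernel-verified Lean document; each statement's English description precedes it below -/
import Mathlib

section
/- Let n ≥ 3 and let γ ∈ C³([a,b], ℝⁿ) with γ'(t) ≠ 0 for all t ∈ [a,b] and γ(t₁) ≠ γ(t₂) whenever t₁ ≠ t₂. Then there exists ε̄₁ > 0 such that for all ε ∈ (0, ε̄₁], the closed normal disks along γ are pairwise disjoint: (γ(t₁) + N_ε(t₁)) ∩ (γ(t₂) + N_ε(t₂)) = ∅ whenever t₁ ≠ t₂, t₁, t₂ ∈ [a,b]. -/
open Metric Set

noncomputable section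

abbrev Euc (n : ℕ) := EuclideanSpace ℝ (Fin n)

/-- The Euclidean Laplacian of `u : ℝⁿ → ℝ`. -/
def laplacian {n : ℕ} (u : Euc n → ℝ) (x : Euc n) : ℝ :=
  ∑ i : Fin n,
    fderiv ℝ (fun y => fderiv ℝ u y (EuclideanSpace.single i 1)) x (EuclideanSpace.single i 1)

/-- A classical solution of `Δu + f(u) = 0` in `Ω`, `u = 0` on `∂Ω`. -/
def IsClassicalSolution {n : ℕ} (f : ℝ → ℝ) (Ω : Set (Euc n)) (u : Euc n → ℝ) : Prop :=
  ContDiffOn ℝ 2 u Ω ∧ ContDiffOn ℝ 1 u (closure Ω) ∧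
    (∀ x ∈ Ω, laplacian u x + f (u x) = 0) ∧ (∀ x ∈ frontier Ω, u x = 0)

/-- Derivative of the curve `γ` within `[a,b]`. -/
def curveDeriv {n : ℕ} (γ : ℝ → Euc n) (a b t : ℝ) : Euc n :=
  derivWithin γ (Set.Icc a b) t

/-- The closed normal disk `N_ε(t)` of radius `ε` to the curve `γ` at parameter `t`. -/
def normalDisk {n : ℕ} (γ : ℝ → Euc n) (a b ε t : ℝ) : Set (Euc n) :=
  {ξ | (inner ℝ ξ (curveDeriv γ a b t) : ℝ) = 0 ∧ ‖ξ‖ ≤ ε}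

/-- The tubular domain `T_ε^γ = ⋃_{t ∈ (a,b)} (γ(t) + N_ε(t))`. -/
def tube {n : ℕ} (γ : ℝ → Euc n) (a b ε : ℝ) : Set (Euc n) :=
  ⋃ t ∈ Set.Ioo a b, (fun ξ => γ t + ξ) '' normalDisk γ a b ε t


set_option maxHeartbeats 4000000

/-- There is `ε̄₁ > 0` such that for `ε ∈ (0, ε̄₁]` the closed normal disks along `γ`
are pairwise disjoint. -/
theorem normal_disks_pairwise_disjoint (n : ℕ) (hn : 3 ≤ n) (a b : ℝ) (hab : a < b)
    (γ : ℝ → Euc n) (hγ : ContDiffOn ℝ 3 γ (Set.Icc a b))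
    (hγ' : ∀ t ∈ Set.Icc a b, curveDeriv γ a b t ≠ 0)
    (hγinj : Set.InjOn γ (Set.Icc a b)) :
    ∃ εbar₁ > 0, ∀ ε : ℝ, 0 < ε → ε ≤ εbar₁ →
      ∀ t₁ ∈ Set.Icc a b, ∀ t₂ ∈ Set.Icc a b, t₁ ≠ t₂ →
        Disjoint ((fun ξ => γ t₁ + ξ) '' normalDisk γ a b ε t₁)
          ((fun ξ => γ t₂ + ξ) '' normalDisk γ a b ε t₂) := by
  set I := Set.Icc a b with hI
  have hne : I.Nonempty := ⟨a, le_refl a, hab.le⟩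
  have hud : UniqueDiffOn ℝ I := uniqueDiffOn_Icc hab
  set γ' : ℝ → Euc n := curveDeriv γ a b with hγ'def
  -- derivative facts
  have hd : ∀ t ∈ I, HasDerivWithinAt γ (γ' t) I t := fun t ht =>
    ((hγ.differentiableOn (by norm_num)) t ht).hasDerivWithinAt
  have hγ'cd : ContDiffOn ℝ 2 γ' I := hγ.derivWithin hud (by norm_num)
  have hγ'cont : ContinuousOn γ' I := hγ'cd.continuousOn
  set γ'' : ℝ → Euc n := derivWithin γ' I with hγ''def
  have hd2 : ∀ t ∈ I, HasDerivWithinAt γ' (γ'' t) I t := fun t ht =>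
    ((hγ'cd.differentiableOn (by norm_num)) t ht).hasDerivWithinAt
  have hγ''cont : ContinuousOn γ'' I := (hγ'cd.derivWithin (m := 1) hud (by norm_num)).continuousOn
  -- m : min of ‖γ'‖
  obtain ⟨t₀, ht₀, hmin⟩ := isCompact_Icc.exists_isMinOn hne
    (continuous_norm.comp_continuousOn hγ'cont)
  set m : ℝ := ‖γ' t₀‖ with hm
  have hm0 : 0 < m := norm_pos_iff.2 (hγ' t₀ ht₀)
  have hmle : ∀ t ∈ I, m ≤ ‖γ' t‖ := fun t ht => hmin ht
  -- M : bound on ‖γ'‖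
  obtain ⟨M, hM⟩ := isCompact_Icc.exists_bound_of_continuousOn hγ'cont
  have hM0 : 0 < M := lt_of_lt_of_le hm0 (hM t₀ ht₀)
  -- L : bound on ‖γ''‖, max with 0
  obtain ⟨L₀, hL₀⟩ := isCompact_Icc.exists_bound_of_continuousOn hγ''cont
  set L : ℝ := max L₀ 0 with hLdef
  have hL0 : 0 ≤ L := le_max_right _ _
  have hL : ∀ t ∈ I, ‖γ'' t‖ ≤ L := fun t ht => (hL₀ t ht).trans (le_max_left _ _)
  -- Lipschitz property of γ'
  have hlip : ∀ s ∈ I, ∀ t ∈ I, ‖γ' t - γ' s‖ ≤ L * ‖t - s‖ := fun s hs t ht =>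
    (convex_Icc a b).norm_image_sub_le_of_norm_hasDerivWithin_le hd2 hL hs ht
  -- δ
  set δ : ℝ := min (m ^ 2 / (2 * (L * M + 1))) (b - a) with hδdef
  have hδ0 : 0 < δ := lt_min (by positivity) (by linarith)
  have hδM : L * M * δ ≤ m ^ 2 / 2 := by
    have h1 : δ ≤ m ^ 2 / (2 * (L * M + 1)) := min_le_left _ _
    have h2 : 0 ≤ L * M := by positivity
    have h3 : L * M * δ ≤ L * M * (m ^ 2 / (2 * (L * M + 1))) := by
      exact mul_le_mul_of_nonneg_left h1 h2
    have h4 : L * M * (m ^ 2 / (2 * (L * M + 1))) ≤ m ^ 2 / 2 := by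
      rw [← mul_div_assoc, div_le_div_iff₀ (by positivity) (by norm_num : (0:ℝ) < 2)]
      nlinarith [sq_nonneg m]
    linarith
  -- far distance d
  set K : Set (ℝ × ℝ) := (I ×ˢ I) ∩ {p | δ ≤ |p.1 - p.2|} with hKdef
  have hKc : IsCompact K := (isCompact_Icc.prod isCompact_Icc).inter_right
    (isClosed_le continuous_const ((continuous_fst.sub continuous_snd).abs))
  have hKne : K.Nonempty := by
    refine ⟨(a, b), ⟨⟨le_refl a, hab.le⟩, ⟨hab.le, le_refl b⟩⟩, ?_⟩
    simp only [Set.mem_setOf_eq]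
    rw [abs_sub_comm, abs_of_nonneg (by linarith)]
    exact min_le_right _ _
  have hKcont : ContinuousOn (fun p : ℝ × ℝ => ‖γ p.1 - γ p.2‖) K := by
    apply ContinuousOn.norm
    exact ((hγ.continuousOn.comp continuousOn_fst (fun p hp => hp.1.1)).sub
      (hγ.continuousOn.comp continuousOn_snd (fun p hp => hp.1.2)))
  obtain ⟨p₀, hp₀K, hp₀min⟩ := hKc.exists_isMinOn hKne hKcont
  set d : ℝ := ‖γ p₀.1 - γ p₀.2‖ with hd_def
  have hd0 : 0 < d := by
    rw [hd_def, norm_pos_iff, sub_ne_zero]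
    intro h
    have := hγinj hp₀K.1.1 hp₀K.1.2 h
    have h2 := hp₀K.2
    simp only [Set.mem_setOf_eq, this] at h2
    simp at h2; linarith
  have hdle : ∀ p ∈ K, d ≤ ‖γ p.1 - γ p.2‖ := fun p hp => hp₀min hp
  -- final εbar₁
  refine ⟨min (m ^ 2 / (4 * (L + 1))) (d / 3), lt_min (by positivity) (by positivity), ?_⟩
  -- key: suffices for t₁ < t₂
  suffices key : ∀ ε : ℝ, 0 < ε → ε ≤ min (m ^ 2 / (4 * (L + 1))) (d / 3) →
      ∀ t₁ ∈ I, ∀ t₂ ∈ I, t₁ < t₂ →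
        Disjoint ((fun ξ => γ t₁ + ξ) '' normalDisk γ a b ε t₁)
          ((fun ξ => γ t₂ + ξ) '' normalDisk γ a b ε t₂) by
    intro ε hε hε' t₁ ht₁ t₂ ht₂ hne'
    rcases lt_or_gt_of_ne hne' with h | h
    · exact key ε hε hε' t₁ ht₁ t₂ ht₂ h
    · exact (key ε hε hε' t₂ ht₂ t₁ ht₁ h).symm
  intro ε hε hε' t₁ ht₁ t₂ ht₂ hlt
  have hεL : ε ≤ m ^ 2 / (4 * (L + 1)) := le_trans hε' (min_le_left _ _)
  have hεd : ε ≤ d / 3 := le_trans hε' (min_le_right _ _)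
  rw [Set.disjoint_left]
  rintro x ⟨ξ₁, ⟨hξ₁o, hξ₁n⟩, hx₁⟩ ⟨ξ₂, ⟨hξ₂o, hξ₂n⟩, hx₂⟩
  have hxeq : γ t₁ + ξ₁ = γ t₂ + ξ₂ := by simpa using hx₁.trans hx₂.symm
  have hdiff : γ t₂ - γ t₁ = ξ₁ - ξ₂ := by
    rw [sub_eq_sub_iff_add_eq_add, add_comm ξ₁ (γ t₁), ← hxeq]
  rcases le_or_gt (t₂ - t₁) δ with hnear | hfar
  · -- near case
    set v : Euc n := γ' t₁ with hv
    have hIcc : Set.Icc t₁ t₂ ⊆ I := Set.Icc_subset_Icc ht₁.1 ht₂.2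
    -- h t = ⟪γ t, v⟫ - ‖v‖^2 * t  on Icc t₁ t₂
    have hderiv : ∀ t ∈ Set.Icc t₁ t₂,
        HasDerivWithinAt (fun s => (inner ℝ (γ s) v : ℝ) - ‖v‖ ^ 2 * s)
          ((inner ℝ (γ' t - v) v : ℝ)) (Set.Icc t₁ t₂) t := by
      intro t ht
      have h1 : HasDerivWithinAt (fun s => (inner ℝ (γ s) v : ℝ))
          ((inner ℝ (γ t) (0 : Euc n) : ℝ) + (inner ℝ (γ' t) v : ℝ)) (Set.Icc t₁ t₂) t :=
        HasDerivWithinAt.inner ℝ ((hd t (hIcc ht)).mono hIcc)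
          (hasDerivWithinAt_const _ _ _)
      have h2 : HasDerivWithinAt (fun s : ℝ => ‖v‖ ^ 2 * s) (‖v‖ ^ 2) (Set.Icc t₁ t₂) t := by
        simpa using (hasDerivWithinAt_id t (Set.Icc t₁ t₂)).const_mul (‖v‖ ^ 2)
      have := h1.sub h2
      simp only [inner_zero_right, zero_add] at this
      refine this.congr_deriv ?_
      rw [inner_sub_left]
      have : (inner ℝ v v : ℝ) = ‖v‖ ^ 2 := real_inner_self_eq_norm_sq v
      linarith
    have hbound : ∀ t ∈ Set.Icc t₁ t₂, ‖(inner ℝ (γ' t - v) v : ℝ)‖ ≤ L * M * δ := by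
      intro t ht
      have h1 : ‖γ' t - v‖ ≤ L * ‖t - t₁‖ := hlip t₁ ht₁ t (hIcc ht)
      have h2 : ‖t - t₁‖ ≤ δ := by
        rw [Real.norm_eq_abs, abs_of_nonneg (by linarith [ht.1])]
        linarith [ht.2]
      have h3 : ‖v‖ ≤ M := hM t₁ ht₁
      calc ‖(inner ℝ (γ' t - v) v : ℝ)‖ = |(inner ℝ (γ' t - v) v : ℝ)| := rfl
        _ ≤ ‖γ' t - v‖ * ‖v‖ := abs_real_inner_le_norm _ _
        _ ≤ (L * δ) * M := by
            apply mul_le_mul (by calc ‖γ' t - v‖ ≤ L * ‖t - t₁‖ := h1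
              _ ≤ L * δ := by exact mul_le_mul_of_nonneg_left h2 hL0) h3 (norm_nonneg _)
              (by positivity)
        _ = L * M * δ := by ring
    have hmvt := (convex_Icc t₁ t₂).norm_image_sub_le_of_norm_hasDerivWithin_le
      hderiv hbound (Set.left_mem_Icc.2 hlt.le) (Set.right_mem_Icc.2 hlt.le)
    -- hmvt : ‖(⟪γ t₂, v⟫ - ‖v‖^2 t₂) - (⟪γ t₁, v⟫ - ‖v‖^2 t₁)‖ ≤ L*M*δ * ‖t₂ - t₁‖
    have hnorm_t : ‖t₂ - t₁‖ = t₂ - t₁ := by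
      rw [Real.norm_eq_abs, abs_of_pos (by linarith)]
    rw [hnorm_t] at hmvt
    have hinnerlow : (m ^ 2 / 2) * (t₂ - t₁) ≤ (inner ℝ (γ t₂ - γ t₁) v : ℝ) := by
      have habs := (abs_le.1 hmvt).1
      have hexp : (inner ℝ (γ t₂ - γ t₁) v : ℝ) =
          ((inner ℝ (γ t₂) v : ℝ) - ‖v‖ ^ 2 * t₂) - ((inner ℝ (γ t₁) v : ℝ) - ‖v‖ ^ 2 * t₁)
          + ‖v‖ ^ 2 * (t₂ - t₁) := by
        rw [inner_sub_left]; ring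
      have hv2 : m ^ 2 ≤ ‖v‖ ^ 2 := pow_le_pow_left₀ hm0.le (hmle t₁ ht₁) 2
      rw [hexp]
      linarith [mul_le_mul_of_nonneg_right hδM (by linarith : (0:ℝ) ≤ t₂ - t₁),
        mul_le_mul_of_nonneg_right hv2 (by linarith : (0:ℝ) ≤ t₂ - t₁)]
    -- upper bound
    have hinnerhigh : (inner ℝ (γ t₂ - γ t₁) v : ℝ) ≤ ε * (L * (t₂ - t₁)) := by
      rw [hdiff, inner_sub_left, hξ₁o, zero_sub]
      have : (inner ℝ ξ₂ v : ℝ) = (inner ℝ ξ₂ (v - γ' t₂) : ℝ) := by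
        rw [inner_sub_right, hξ₂o]; ring
      rw [this]  -- goal: -(inner ℝ ξ₂ (v - γ' t₂)) ≤ ε * (L * (t₂ - t₁))
      have h1 : |(inner ℝ ξ₂ (v - γ' t₂) : ℝ)| ≤ ‖ξ₂‖ * ‖v - γ' t₂‖ := abs_real_inner_le_norm _ _
      have h2 : ‖v - γ' t₂‖ ≤ L * ‖t₁ - t₂‖ := by
        have := hlip t₂ ht₂ t₁ ht₁; exact this
      have h3 : ‖t₁ - t₂‖ = t₂ - t₁ := by
        rw [Real.norm_eq_abs, abs_sub_comm, abs_of_pos (by linarith)]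
      rw [h3] at h2
      have h4 : ‖ξ₂‖ * ‖v - γ' t₂‖ ≤ ε * (L * (t₂ - t₁)) := by
        apply mul_le_mul hξ₂n h2 (norm_nonneg _) hε.le
      linarith [neg_abs_le (inner ℝ ξ₂ (v - γ' t₂) : ℝ), abs_le.1 h1]
    -- contradiction
    have hεLm : ε * L ≤ m ^ 2 / 4 := by
      have : ε * L ≤ (m ^ 2 / (4 * (L + 1))) * L := mul_le_mul_of_nonneg_right hεL hL0
      have h2 : (m ^ 2 / (4 * (L + 1))) * L ≤ m ^ 2 / 4 := by
        rw [div_mul_eq_mul_div, div_le_div_iff₀ (by positivity) (by norm_num : (0:ℝ) < 4)]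
        nlinarith [sq_nonneg m]
      linarith
    have hΔ : (0:ℝ) < t₂ - t₁ := by linarith
    have hstep : ε * (L * (t₂ - t₁)) ≤ m ^ 2 / 4 * (t₂ - t₁) := by
      have := mul_le_mul_of_nonneg_right hεLm hΔ.le
      linarith [this]
    have hpos : 0 < m ^ 2 * (t₂ - t₁) := mul_pos (pow_pos hm0 2) hΔ
    linarith
  · -- far case
    have hK : (t₁, t₂) ∈ K := by
      refine ⟨⟨ht₁, ht₂⟩, ?_⟩
      simp only [Set.mem_setOf_eq]
      rw [abs_sub_comm, abs_of_pos (by linarith)]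
      linarith
    have h1' := hdle (t₁, t₂) hK
    dsimp only at h1'
    have h1 : d ≤ ‖γ t₁ - γ t₂‖ := h1'
    have h2 : ‖γ t₁ - γ t₂‖ = ‖ξ₁ - ξ₂‖ := by
      rw [← norm_neg, neg_sub, hdiff]
    have h3 : ‖ξ₁ - ξ₂‖ ≤ 2 * ε := by
      calc ‖ξ₁ - ξ₂‖ ≤ ‖ξ₁‖ + ‖ξ₂‖ := norm_sub_le _ _
        _ ≤ 2 * ε := by linarith
    linarith
end
end

section
/- Let n ≥ 3 and let γ ∈ C³([a,b], ℝⁿ) with γ'(t) ≠ 0 for all t ∈ [a,b] and γ(t₁) ≠ γ(t₂) whenever t₁ ≠ t₂. Then there exists ε̄₁ > 0 such that for every ε ∈ (0, ε̄₁) and every x ∈ T_ε^γ there exists a unique t ∈ (a,b) such that |x − γ(t)| = dist(x, Γ); moreover, for this t one has (x − γ(t))·γ'(t) = 0. -/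
open Metric Set

noncomputable section

set_option maxHeartbeats 1000000 in
/-- For small `ε`, every point of `T_ε^γ` has a unique nearest parameter `t ∈ (a,b)` on the
curve, and the difference `x − γ(t)` is orthogonal to `γ'(t)`. -/
theorem unique_nearest_parameter (n : ℕ) (hn : 3 ≤ n) (a b : ℝ) (hab : a < b)
    (γ : ℝ → Euc n) (hγ : ContDiffOn ℝ 3 γ (Set.Icc a b))
    (hγ' : ∀ t ∈ Set.Icc a b, curveDeriv γ a b t ≠ 0)
    (hγinj : Set.InjOn γ (Set.Icc a b)) :
    ∃ εbar₁ > 0, ∀ ε ∈ Set.Ioo 0 εbar₁, ∀ x ∈ tube γ a b ε,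
      (∃! t : ℝ, t ∈ Set.Ioo a b ∧ ‖x - γ t‖ = infDist x (γ '' Set.Icc a b)) ∧
      (∀ t ∈ Set.Ioo a b, ‖x - γ t‖ = infDist x (γ '' Set.Icc a b) →
        (inner ℝ (x - γ t) (curveDeriv γ a b t) : ℝ) = 0) := by
  set I := Set.Icc a b with hIdef
  have hIne : I.Nonempty := Set.nonempty_Icc.2 hab.le
  have hcomp : IsCompact I := isCompact_Icc
  have hconv : Convex ℝ I := convex_Icc a b
  have hUD : UniqueDiffOn ℝ I := uniqueDiffOn_Icc hab
  set g : ℝ → Euc n := fun t => curveDeriv γ a b t with hgdef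
  have hγdiff : DifferentiableOn ℝ γ I := hγ.differentiableOn (by norm_num)
  have hγd : ∀ t ∈ I, HasDerivWithinAt γ (g t) I t := fun t ht =>
    (hγdiff t ht).hasDerivWithinAt
  have hgC1 : ContDiffOn ℝ 1 g I := hγ.derivWithin hUD (by norm_num)
  have hgcont : ContinuousOn g I := hgC1.continuousOn
  -- bound M on the derivative of g, hence Lipschitz constant of g
  obtain ⟨M0, hM0⟩ := hcomp.exists_bound_of_continuousOn
    (hgC1.continuousOn_derivWithin hUD le_rfl)
  set M : ℝ := max M0 0 + 1 with hMdef
  have hM : 0 < M := by positivity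
  have hMb : ∀ t ∈ I, ‖derivWithin g I t‖ ≤ M := fun t ht =>
    (hM0 t ht).trans (by simp [hMdef]; linarith [le_max_left M0 0])
  have hgd : ∀ t ∈ I, HasDerivWithinAt g (derivWithin g I t) I t := fun t ht =>
    ((hgC1.differentiableOn (by norm_num)) t ht).hasDerivWithinAt
  have hLip : ∀ s ∈ I, ∀ t ∈ I, ‖g s - g t‖ ≤ M * |s - t| := by
    intro s hs t ht
    have := Convex.norm_image_sub_le_of_norm_hasDerivWithin_le hgd hMb hconv ht hs
    simpa [Real.norm_eq_abs] using this
  -- minimum m of ‖g‖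
  obtain ⟨tm, htm, hmin⟩ := hcomp.exists_isMinOn hIne hgcont.norm
  set m : ℝ := ‖g tm‖ with hmdef
  have hm : 0 < m := norm_pos_iff.2 (hγ' tm htm)
  have hmle : ∀ t ∈ I, m ≤ ‖g t‖ := fun t ht => hmin ht
  -- Taylor estimate
  have hTay : ∀ t ∈ I, ∀ s ∈ I, ‖γ s - γ t - (s - t) • g t‖ ≤ M * |s - t| * |s - t| := by
    intro t ht s hs
    set J := Set.Icc (min s t) (max s t) with hJdef
    have hJI : J ⊆ I := by
      apply Set.Icc_subset_Icc
      · exact le_min hs.1 ht.1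
      · exact max_le hs.2 ht.2
    have hFd : ∀ u ∈ J, HasDerivWithinAt (fun u => γ u - u • g t) (g u - g t) J u := by
      intro u hu
      exact ((hγd u (hJI hu)).mono hJI).sub
        ((hasDerivWithinAt_id u J).smul_const (g t) |>.congr_deriv (one_smul ℝ (g t)))
    have hFb : ∀ u ∈ J, ‖g u - g t‖ ≤ M * |s - t| := by
      intro u hu
      refine (hLip u (hJI hu) t ht).trans ?_
      have h1 : min s t ≤ u := hu.1
      have h2 : u ≤ max s t := hu.2
      have : |u - t| ≤ |s - t| := by
        rcases le_total s t with h | h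
        · rw [min_eq_left h] at h1; rw [max_eq_right h] at h2
          rw [abs_of_nonpos (by linarith), abs_of_nonpos (by linarith)]; linarith
        · rw [min_eq_right h] at h1; rw [max_eq_left h] at h2
          rw [abs_of_nonneg (by linarith), abs_of_nonneg (by linarith)]; linarith
      nlinarith [abs_nonneg (s - t), abs_nonneg (u - t)]
    have htJ : t ∈ J := ⟨min_le_right s t, le_max_right s t⟩
    have hsJ : s ∈ J := ⟨min_le_left s t, le_max_left s t⟩
    have := Convex.norm_image_sub_le_of_norm_hasDerivWithin_le hFd hFb (convex_Icc _ _) htJ hsJ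
    calc ‖γ s - γ t - (s - t) • g t‖
        = ‖(γ s - s • g t) - (γ t - t • g t)‖ := by congr 1; rw [sub_smul]; abel
      _ ≤ M * |s - t| * ‖s - t‖ := this
      _ = M * |s - t| * |s - t| := by rw [Real.norm_eq_abs]
  -- near lower bound on the curve increment
  set δ : ℝ := m / (2 * M) with hδdef
  have hδ : 0 < δ := by positivity
  have hnear : ∀ t ∈ I, ∀ s ∈ I, |s - t| ≤ δ → (m / 2) * |s - t| ≤ ‖γ s - γ t‖ := by
    intro t ht s hs hd
    have h1 := hTay t ht s hs
    have h2 : ‖(s - t) • g t‖ = |s - t| * ‖g t‖ := by rw [norm_smul, Real.norm_eq_abs]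
    have h3 : m ≤ ‖g t‖ := hmle t ht
    have h4 : ‖(s - t) • g t‖ - ‖γ s - γ t‖ ≤ ‖γ s - γ t - (s - t) • g t‖ := by
      have h5 := abs_norm_sub_norm_le (γ s - γ t) ((s - t) • g t)
      linarith [(abs_le.1 h5).1]
    have hMδ : M * δ = m / 2 := by rw [hδdef]; field_simp
    nlinarith [abs_nonneg (s - t), norm_nonneg (γ s - γ t), norm_nonneg (g t),
      mul_le_mul_of_nonneg_right (hd.trans_eq (by linarith [hMδ] : δ = δ)) (abs_nonneg (s - t))]
  -- far lower bound from injectivity and compactness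
  obtain ⟨ρ, hρpos, hρ⟩ : ∃ ρ > 0, ∀ s ∈ I, ∀ t ∈ I, δ ≤ |s - t| → ρ ≤ ‖γ s - γ t‖ := by
    set S : Set (ℝ × ℝ) := (I ×ˢ I) ∩ {p | δ ≤ |p.1 - p.2|} with hSdef
    have hScomp : IsCompact S := (hcomp.prod hcomp).inter_right
      (isClosed_le continuous_const (continuous_fst.sub continuous_snd).abs)
    rcases S.eq_empty_or_nonempty with hS | hS
    · refine ⟨1, one_pos, fun s hs t ht hd => absurd ?_ (by simp [hS] : ((s, t) : ℝ × ℝ) ∉ S)⟩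
      exact ⟨⟨hs, ht⟩, hd⟩
    · have hc : ContinuousOn (fun p : ℝ × ℝ => ‖γ p.1 - γ p.2‖) S := by
        apply ContinuousOn.norm
        exact (hγ.continuousOn.comp continuousOn_fst fun p hp => hp.1.1).sub
          (hγ.continuousOn.comp continuousOn_snd fun p hp => hp.1.2)
      obtain ⟨p₀, hp₀S, hp₀⟩ := hScomp.exists_isMinOn hS hc
      refine ⟨‖γ p₀.1 - γ p₀.2‖, ?_, fun s hs t ht hd => isMinOn_iff.1 hp₀ (s, t) ⟨⟨hs, ht⟩, hd⟩⟩
      simp only [gt_iff_lt, norm_pos_iff, ne_eq, sub_eq_zero]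
      intro hEq
      have h12 : p₀.1 = p₀.2 := hγinj hp₀S.1.1 hp₀S.1.2 hEq
      have hd0 := hp₀S.2
      rw [Set.mem_setOf_eq, h12, sub_self, abs_zero] at hd0
      linarith
  -- the threshold
  refine ⟨min (ρ / 2) (m ^ 2 / (8 * M)), lt_min (by positivity) (by positivity), ?_⟩
  rintro ε ⟨hε0, hεlt⟩ x hx
  have hερ : ε < ρ / 2 := hεlt.trans_le (min_le_left _ _)
  have hεm : ε < m ^ 2 / (8 * M) := hεlt.trans_le (min_le_right _ _)
  simp only [tube, Set.mem_iUnion, Set.mem_image, exists_prop] at hx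
  obtain ⟨t, ht, ξ, hξ, hxeq⟩ := hx
  obtain ⟨hξg, hξε⟩ := hξ
  have htI : t ∈ I := Set.Ioo_subset_Icc_self ht
  have hxt : x - γ t = ξ := by rw [← hxeq]; abel
  have hz : ∀ r : ℝ, (inner ℝ ξ (r • g t) : ℝ) = 0 := by
    intro r; rw [real_inner_smul_right]
    have : (inner ℝ ξ (g t) : ℝ) = 0 := hξg
    rw [this, mul_zero]
  -- key strict inequality: t is the unique nearest parameter
  have key : ∀ s ∈ I, s ≠ t → ‖ξ‖ < ‖x - γ s‖ := by
    intro s hsI hst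
    have hxs : x - γ s = ξ + (γ t - γ s) := by rw [← hxeq]; abel
    have hsq : ‖x - γ s‖ ^ 2 = ‖ξ‖ ^ 2 + 2 * inner ℝ ξ (γ t - γ s) + ‖γ t - γ s‖ ^ 2 := by
      rw [hxs, norm_add_sq_real]
    have hstp : (0 : ℝ) < |s - t| := abs_pos.2 (sub_ne_zero.2 hst)
    have hrev : ‖γ t - γ s‖ = ‖γ s - γ t‖ := norm_sub_rev _ _
    refine lt_of_pow_lt_pow_left₀ 2 (norm_nonneg _) ?_
    rcases le_or_gt (|s - t|) δ with hcase | hcase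
    · -- near case
      have hw : γ t - γ s = -(γ s - γ t - (s - t) • g t) + (-(s - t)) • g t := by
        rw [neg_smul]; abel
      have hip : (inner ℝ ξ (γ t - γ s) : ℝ) = inner ℝ ξ (-(γ s - γ t - (s - t) • g t)) := by
        rw [hw, inner_add_right, hz (-(s - t)), add_zero]
      have hbound : |(inner ℝ ξ (γ t - γ s) : ℝ)| ≤ ε * (M * |s - t| * |s - t|) := by
        rw [hip]
        refine (abs_real_inner_le_norm _ _).trans ?_
        rw [norm_neg]
        exact mul_le_mul hξε (hTay t htI s hsI) (norm_nonneg _) hε0.le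
      have hlow := hnear t htI s hsI hcase
      have hlow2 : (m / 2) ^ 2 * |s - t| ^ 2 ≤ ‖γ t - γ s‖ ^ 2 := by
        rw [hrev]
        nlinarith [mul_self_le_mul_self
          (mul_nonneg (by linarith : (0:ℝ) ≤ m / 2) (abs_nonneg (s - t))) hlow]
      have hεM : 2 * (ε * M) < m ^ 2 / 4 := by
        rw [lt_div_iff₀ (by positivity : (0:ℝ) < 8 * M)] at hεm
        nlinarith
      nlinarith [(abs_le.1 hbound).1, sq_nonneg (s - t), hstp,
        mul_pos (mul_pos hstp hstp) hM]
    · -- far case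
      have hρs := hρ s hsI t htI hcase.le
      have hcross : |(inner ℝ ξ (γ t - γ s) : ℝ)| ≤ ε * ‖γ t - γ s‖ :=
        (abs_real_inner_le_norm _ _).trans (mul_le_mul_of_nonneg_right hξε (norm_nonneg _))
      rw [hrev] at hcross
      nlinarith [(abs_le.1 hcross).1, hρpos, hερ, norm_nonneg (γ s - γ t), hrev]
  have hΓne : (γ '' I).Nonempty := ⟨γ t, mem_image_of_mem γ htI⟩
  have hinf : infDist x (γ '' I) = ‖ξ‖ := by
    apply le_antisymm
    · calc infDist x (γ '' I) ≤ dist x (γ t) := infDist_le_dist_of_mem (mem_image_of_mem _ htI)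
        _ = ‖ξ‖ := by rw [dist_eq_norm, hxt]
    · by_contra h
      push_neg at h
      obtain ⟨y, ⟨s, hsI, rfl⟩, hy⟩ := (infDist_lt_iff hΓne).1 h
      rw [dist_eq_norm] at hy
      rcases eq_or_ne s t with rfl | hst
      · rw [hxt] at hy; exact lt_irrefl _ hy
      · exact absurd hy (not_lt.2 (key s hsI hst).le)
  have hxtn : ‖x - γ t‖ = infDist x (γ '' I) := by rw [hxt, hinf]
  have huniq : ∀ t' ∈ Set.Ioo a b, ‖x - γ t'‖ = infDist x (γ '' I) → t' = t := by
    intro t' ht' hd'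
    by_contra hne
    have hk := key t' (Set.Ioo_subset_Icc_self ht') hne
    rw [hd', hinf] at hk
    exact lt_irrefl _ hk
  refine ⟨⟨t, ⟨ht, hxtn⟩, fun t' h' => huniq t' h'.1 h'.2⟩, ?_⟩
  intro t' ht' hd'
  have := huniq t' ht' hd'
  subst this
  rw [hxt]
  exact hξg
end
end

section
/- Let n ≥ 3, let γ̃ : [a,b] → ℝⁿ be a C³ curve with γ̃'(t) ≠ 0 for all t, γ̃(a) = γ̃(b), γ̃'(a) = γ̃'(b), and γ̃(t₁) ≠ γ̃(t₂) for t₁ ≠ t₂ in [a,b). Let ε > 0 be such that every x ∈ T̃_ε(Γ̃) has a unique nearest point p(x) ∈ Γ̃ (i.e. |x − p(x)| = dist(x, Γ̃)), and set ṽ(x) = x − p(x). Then for every t ∈ [a,b], ṽ is differentiable at γ̃(t) and its derivative L there satisfies L[γ̃'(t)] = 0 and L[ψ] = ψ for every ψ ∈ ℝⁿ with ψ·γ̃'(t) = 0; consequently div ṽ(γ̃(t)) = trace L = n − 1, and L[η]·η = |η|² − (η·γ̃'(t))²/|γ̃'(t)|² for every η ∈ ℝⁿ. -/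
open Metric Set

noncomputable section

/-- The tubular neighbourhood `T̃_ε(Γ) = {x : dist(x,Γ) < ε}`. -/
def distTube {n : ℕ} (Γ : Set (Euc n)) (ε : ℝ) : Set (Euc n) :=
  {x | infDist x Γ < ε}



section
variable (n : ℕ) (G : Euc n)

lemma proj_apply (y : Euc n) :
    ((innerSL ℝ (‖G‖⁻¹ • G)).smulRight (‖G‖⁻¹ • G)) y
      = (inner ℝ (‖G‖⁻¹ • G) y : ℝ) • (‖G‖⁻¹ • G) := by
  simp only [ContinuousLinearMap.smulRight_apply, innerSL_apply_apply]

lemma unit_norm (hG : G ≠ 0) : ‖(‖G‖⁻¹ • G)‖ = 1 := by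
  have hn : ‖G‖ ≠ 0 := by simpa using hG
  rw [norm_smul, Real.norm_eq_abs, abs_of_nonneg (inv_nonneg.2 (norm_nonneg G))]
  field_simp

lemma proj_tangent (hG : G ≠ 0) :
    ((innerSL ℝ (‖G‖⁻¹ • G)).smulRight (‖G‖⁻¹ • G)) G = G := by
  have hn : ‖G‖ ≠ 0 := by simpa using hG
  rw [proj_apply, real_inner_smul_left, real_inner_self_eq_norm_mul_norm]
  simp only [smul_smul]
  have : ‖G‖⁻¹ * (‖G‖ * ‖G‖) * ‖G‖⁻¹ = 1 := by field_simp
  rw [this, one_smul]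

lemma proj_normal (ψ : Euc n) (hψ : (inner ℝ ψ G : ℝ) = 0) :
    ((innerSL ℝ (‖G‖⁻¹ • G)).smulRight (‖G‖⁻¹ • G)) ψ = 0 := by
  rw [proj_apply, real_inner_smul_left, real_inner_comm, hψ]
  simp

lemma proj_quad (hG : G ≠ 0) (η : Euc n) :
    (inner ℝ (η - ((innerSL ℝ (‖G‖⁻¹ • G)).smulRight (‖G‖⁻¹ • G)) η) η : ℝ)
      = ‖η‖ ^ 2 - (inner ℝ η G : ℝ) ^ 2 / ‖G‖ ^ 2 := by
  have hn : ‖G‖ ≠ 0 := by simpa using hG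
  rw [inner_sub_left, proj_apply, real_inner_smul_left, real_inner_smul_left,
    real_inner_self_eq_norm_mul_norm, real_inner_comm G η]
  field_simp

lemma proj_norm_le (hG : G ≠ 0) (y : Euc n) :
    ‖((innerSL ℝ (‖G‖⁻¹ • G)).smulRight (‖G‖⁻¹ • G)) y‖ ≤ ‖y‖ := by
  rw [proj_apply, norm_smul, unit_norm n G hG, mul_one]
  calc |(inner ℝ (‖G‖⁻¹ • G) y : ℝ)| ≤ ‖(‖G‖⁻¹ • G)‖ * ‖y‖ := abs_real_inner_le_norm _ _
  _ = ‖y‖ := by rw [unit_norm n G hG, one_mul]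

end


lemma trace_proj (n : ℕ) (T : Euc n) (hT : ‖T‖ = 1) :
    LinearMap.trace ℝ (Euc n)
      ((((ContinuousLinearMap.id ℝ (Euc n)) - (innerSL ℝ T).smulRight T) :
        Euc n →L[ℝ] Euc n) : Euc n →ₗ[ℝ] Euc n) = (n : ℝ) - 1 := by
  have h1 : (((ContinuousLinearMap.id ℝ (Euc n)) - (innerSL ℝ T).smulRight T :
      Euc n →L[ℝ] Euc n) : Euc n →ₗ[ℝ] Euc n)
      = LinearMap.id - (((innerSL ℝ T).smulRight T : Euc n →L[ℝ] Euc n) : Euc n →ₗ[ℝ] Euc n) := by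
    ext y; simp
  rw [h1, map_sub]
  have h2 : (((innerSL ℝ T).smulRight T : Euc n →L[ℝ] Euc n) : Euc n →ₗ[ℝ] Euc n)
      = dualTensorHom ℝ (Euc n) (Euc n) (((innerSL ℝ T).toLinearMap) ⊗ₜ T) := by
    ext y; simp [dualTensorHom_apply]
  rw [h2, LinearMap.trace_eq_contract_apply, contractLeft_apply]
  have hTT : ((innerSL ℝ T).toLinearMap) T = 1 := by
    have : (inner ℝ T T : ℝ) = 1 := by
      rw [real_inner_self_eq_norm_mul_norm, hT]; norm_num
    simpa using this
  rw [hTT, LinearMap.trace_id, finrank_euclideanSpace_fin]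


variable {n : ℕ} {a b : ℝ} {γ : ℝ → Euc n}

lemma curve_hasDeriv (hγ : ContDiffOn ℝ 3 γ (Icc a b)) {u : ℝ} (hu : u ∈ Icc a b) :
    HasDerivWithinAt γ (derivWithin γ (Icc a b) u) (Icc a b) u :=
  ((hγ.differentiableOn (by norm_num)) u hu).hasDerivWithinAt

lemma exists_lip (hab : a < b) (hγ : ContDiffOn ℝ 3 γ (Icc a b)) :
    ∃ M : ℝ, 1 ≤ M ∧ ∀ s ∈ Icc a b, ∀ u ∈ Icc a b,
      ‖derivWithin γ (Icc a b) s - derivWithin γ (Icc a b) u‖ ≤ M * |s - u| := by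
  set g := derivWithin γ (Icc a b) with hgdef
  have hg2 : ContDiffOn ℝ 2 g (Icc a b) :=
    hγ.derivWithin (uniqueDiffOn_Icc hab) (by norm_num)
  have hgdiff : DifferentiableOn ℝ g (Icc a b) := hg2.differentiableOn (by norm_num)
  have hcont : ContinuousOn (derivWithin g (Icc a b)) (Icc a b) :=
    (hg2.derivWithin (m := 1) (uniqueDiffOn_Icc hab) (by norm_num)).continuousOn
  obtain ⟨C, hC⟩ := isCompact_Icc.exists_bound_of_continuousOn hcont
  refine ⟨max C 1, le_max_right _ _, fun s hs u hu => ?_⟩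
  have := (convex_Icc a b).norm_image_sub_le_of_norm_hasDerivWithin_le
    (C := max C 1) (f := g) (f' := derivWithin g (Icc a b))
    (fun w hw => (hgdiff w hw).hasDerivWithinAt)
    (fun w hw => le_trans (hC w hw) (le_max_left C 1)) hu hs
  simpa [Real.norm_eq_abs] using this

lemma taylor_bound (hab : a < b) (hγ : ContDiffOn ℝ 3 γ (Icc a b)) {M : ℝ}
    (hM1 : 1 ≤ M)
    (hM : ∀ s ∈ Icc a b, ∀ u ∈ Icc a b,
      ‖derivWithin γ (Icc a b) s - derivWithin γ (Icc a b) u‖ ≤ M * |s - u|)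
    {s u : ℝ} (hs : s ∈ Icc a b) (hu : u ∈ Icc a b) :
    ‖γ s - γ u - (s - u) • derivWithin γ (Icc a b) u‖ ≤ M * |s - u| ^ 2 := by
  set g := derivWithin γ (Icc a b) with hgdef
  set J := uIcc s u with hJdef
  have hJ : J ⊆ Icc a b := (ordConnected_Icc).uIcc_subset hs hu
  have hderiv : ∀ w ∈ J, HasDerivWithinAt (fun w => γ w - w • g u) (g w - g u) J w := by
    intro w hw
    have h1 : HasDerivWithinAt γ (g w) J w := (curve_hasDeriv hγ (hJ hw)).mono hJ
    have h2 : HasDerivWithinAt (fun y : ℝ => y • g u) (g u) J w := by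
      simpa using ((hasDerivAt_id w).smul_const (g u)).hasDerivWithinAt (s := J)
    exact h1.sub h2
  have hbound : ∀ w ∈ J, ‖g w - g u‖ ≤ M * |s - u| := by
    intro w hw
    refine le_trans (hM w (hJ hw) u hu) ?_
    have h1 : M * 0 ≤ M * |s-u| := by
      nlinarith [abs_nonneg (s-u)]
    have hwu : |w - u| ≤ |s - u| := by
      rcases le_total s u with h | h
      · rw [hJdef, uIcc_of_le h] at hw; rw [abs_sub_comm w u, abs_sub_comm s u]
        rw [abs_of_nonneg (by linarith [hw.1, hw.2] : 0 ≤ u - w),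
          abs_of_nonneg (by linarith : 0 ≤ u - s)]
        linarith [hw.1]
      · rw [hJdef, uIcc_of_ge h] at hw
        rw [abs_of_nonneg (by linarith [hw.1] : 0 ≤ w - u), abs_of_nonneg (by linarith : 0 ≤ s - u)]
        linarith [hw.2]
    have hMnn : 0 ≤ M := by linarith
    exact mul_le_mul_of_nonneg_left hwu hMnn
  have key := (convex_uIcc s u).norm_image_sub_le_of_norm_hasDerivWithin_le
    hderiv hbound (right_mem_uIcc) (left_mem_uIcc)
  have : γ s - s • g u - (γ u - u • g u) = γ s - γ u - (s - u) • g u := by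
    rw [sub_smul]; abel
  rw [this] at key
  calc ‖γ s - γ u - (s - u) • g u‖ ≤ M * |s - u| * ‖s - u‖ := key
  _ = M * |s - u| ^ 2 := by rw [Real.norm_eq_abs]; ring


variable {n : ℕ} {a b : ℝ} {γ : ℝ → Euc n}

lemma curve_hasDeriv' (hγ : ContDiffOn ℝ 3 γ (Icc a b)) {u : ℝ} (hu : u ∈ Icc a b) :
    HasDerivWithinAt γ (derivWithin γ (Icc a b) u) (Icc a b) u :=
  ((hγ.differentiableOn (by norm_num)) u hu).hasDerivWithinAt

lemma lower_bound {M : ℝ} (hM1 : 1 ≤ M)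
    (hTay : ∀ s ∈ Icc a b, ∀ u ∈ Icc a b,
      ‖γ s - γ u - (s - u) • derivWithin γ (Icc a b) u‖ ≤ M * |s - u| ^ 2)
    {s u : ℝ} (hs : s ∈ Icc a b) (hu : u ∈ Icc a b)
    (hsu : |s - u| ≤ ‖derivWithin γ (Icc a b) u‖ / (2 * M)) :
    ‖derivWithin γ (Icc a b) u‖ / 2 * |s - u| ≤ ‖γ s - γ u‖ := by
  set g := derivWithin γ (Icc a b)
  have h1 := hTay s hs u hu
  have h2 : ‖(s - u) • g u‖ - ‖γ s - γ u‖ ≤ ‖γ s - γ u - (s - u) • g u‖ := by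
    have := norm_sub_norm_le ((s - u) • g u) (γ s - γ u)
    calc ‖(s - u) • g u‖ - ‖γ s - γ u‖ ≤ ‖(s - u) • g u - (γ s - γ u)‖ := this
    _ = ‖γ s - γ u - (s - u) • g u‖ := by rw [← norm_neg]; congr 1; abel
  have h3 : ‖(s - u) • g u‖ = |s - u| * ‖g u‖ := by
    rw [norm_smul, Real.norm_eq_abs]
  have hM0 : (0:ℝ) < M := by linarith
  have hsu' : |s - u| * (2 * M) ≤ ‖g u‖ := (le_div_iff₀ (by positivity)).1 hsu
  nlinarith [abs_nonneg (s - u), norm_nonneg (g u), norm_nonneg (γ s - γ u),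
    mul_le_mul_of_nonneg_right hsu' (abs_nonneg (s - u))]

lemma perp_min (hab : a < b) (hγ : ContDiffOn ℝ 3 γ (Icc a b))
    (hclose : γ a = γ b)
    (hclose' : derivWithin γ (Icc a b) a = derivWithin γ (Icc a b) b)
    (x : Euc n) {s : ℝ} (hs : s ∈ Icc a b)
    (hmin : ∀ u ∈ Icc a b, ‖x - γ s‖ ≤ ‖x - γ u‖) :
    (inner ℝ (x - γ s) (derivWithin γ (Icc a b) s) : ℝ) = 0 := by
  set g := derivWithin γ (Icc a b) with hgdef
  set K := Icc a b with hKdef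
  set F : ℝ → ℝ := fun u => (inner ℝ (x - γ u) (x - γ u) : ℝ) with hFdef
  set D : ℝ → ℝ := fun u => -(2 * (inner ℝ (x - γ u) (g u) : ℝ)) with hDdef
  have hF : ∀ u ∈ K, HasDerivWithinAt F (D u) K u := by
    intro u hu
    have h1 : HasDerivWithinAt (fun u => x - γ u) (-(g u)) K u :=
      (curve_hasDeriv' hγ hu).const_sub x
    have h2 := h1.inner ℝ h1
    refine h2.congr_deriv ?_
    simp only [hDdef, inner_neg_left, inner_neg_right]
    rw [real_inner_comm (g u) (x - γ u)]
    ring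
  have hFmin : ∀ u ∈ K, F s ≤ F u := by
    intro u hu
    simp only [hFdef, real_inner_self_eq_norm_sq]
    exact pow_le_pow_left₀ (norm_nonneg _) (hmin u hu) 2
  -- right derivative sign at a minimum point u < b
  have claim_right : ∀ u ∈ K, u < b → (∀ w ∈ K, F u ≤ F w) → 0 ≤ D u := by
    intro u hu hub humin
    have htend : Filter.Tendsto (slope F u) (nhdsWithin u (K \ {u})) (nhds (D u)) :=
      hasDerivWithinAt_iff_tendsto_slope.1 (hF u hu)
    have hsub : Ioc u b ⊆ K \ {u} := by
      intro w hw
      exact ⟨⟨le_trans hu.1 (le_of_lt hw.1), hw.2⟩, ne_of_gt hw.1⟩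
    have hne : (nhdsWithin u (Ioc u b)).NeBot := by
      rw [← mem_closure_iff_nhdsWithin_neBot, closure_Ioc (ne_of_lt hub)]
      exact ⟨le_refl u, le_of_lt hub⟩
    have htend' : Filter.Tendsto (slope F u) (nhdsWithin u (Ioc u b)) (nhds (D u)) :=
      htend.mono_left (nhdsWithin_mono u hsub)
    refine ge_of_tendsto htend' ?_
    filter_upwards [self_mem_nhdsWithin] with w hw
    rw [slope_def_field]
    exact div_nonneg (by linarith [humin w (hsub hw).1]) (by linarith [hw.1])
  have claim_left : ∀ u ∈ K, a < u → (∀ w ∈ K, F u ≤ F w) → D u ≤ 0 := by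
    intro u hu hau humin
    have htend : Filter.Tendsto (slope F u) (nhdsWithin u (K \ {u})) (nhds (D u)) :=
      hasDerivWithinAt_iff_tendsto_slope.1 (hF u hu)
    have hsub : Ico a u ⊆ K \ {u} := by
      intro w hw
      exact ⟨⟨hw.1, le_trans (le_of_lt hw.2) hu.2⟩, ne_of_lt hw.2⟩
    have hne : (nhdsWithin u (Ico a u)).NeBot := by
      rw [← mem_closure_iff_nhdsWithin_neBot, closure_Ico (ne_of_lt hau)]
      exact ⟨le_of_lt hau, le_refl u⟩
    have htend' : Filter.Tendsto (slope F u) (nhdsWithin u (Ico a u)) (nhds (D u)) :=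
      htend.mono_left (nhdsWithin_mono u hsub)
    refine le_of_tendsto htend' ?_
    filter_upwards [self_mem_nhdsWithin] with w hw
    rw [slope_def_field]
    exact div_nonpos_of_nonneg_of_nonpos (by linarith [humin w (hsub hw).1]) (by linarith [hw.2])
  have hDs : D s = 0 := by
    rcases eq_or_lt_of_le hs.1 with h1 | h1
    · -- s = a
      have hsa : s = a := h1.symm
      have hDa : 0 ≤ D s := claim_right s hs (by rw [hsa]; exact hab) hFmin
      have hminb : ∀ w ∈ K, F b ≤ F w := by
        intro w hw
        have : F b = F s := by rw [hsa]; simp only [hFdef, hclose]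
        rw [this]; exact hFmin w hw
      have hDb : D b ≤ 0 := claim_left b ⟨le_of_lt hab, le_refl b⟩ hab hminb
      have : D b = D s := by
        simp only [hDdef]
        rw [hsa, ← hclose, ← hclose']
      linarith
    · rcases eq_or_lt_of_le hs.2 with h2 | h2
      · -- s = b
        have hsb : s = b := h2
        have hDb : D s ≤ 0 := claim_left s hs (by rw [hsb]; exact hab) hFmin
        have hmina : ∀ w ∈ K, F a ≤ F w := by
          intro w hw
          have : F a = F s := by rw [hsb]; simp only [hFdef, hclose]
          rw [this]; exact hFmin w hw
        have hDa : 0 ≤ D a := claim_right a ⟨le_refl a, le_of_lt hab⟩ hab hmina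
        have : D a = D s := by
          simp only [hDdef]
          rw [hsb, hclose, hclose']
        linarith
      · exact le_antisymm (claim_left s hs h1 hFmin) (claim_right s hs h2 hFmin)
  have : -(2 * (inner ℝ (x - γ s) (g s) : ℝ)) = 0 := hDs
  linarith


variable {n : ℕ} {a b : ℝ} {γ : ℝ → Euc n}

lemma same_point (hab : a < b) (hγinj : Set.InjOn γ (Set.Ico a b))
    (hclose : γ a = γ b)
    (hclose' : derivWithin γ (Icc a b) a = derivWithin γ (Icc a b) b)
    {s t : ℝ} (hs : s ∈ Icc a b) (ht : t ∈ Icc a b) (h : γ s = γ t) :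
    derivWithin γ (Icc a b) s = derivWithin γ (Icc a b) t := by
  rcases eq_or_ne s t with rfl | hst
  · rfl
  rcases eq_or_ne s b with hsb | hsb
  · rcases eq_or_ne t b with htb | htb
    · rw [hsb, htb]
    · have ht' : t ∈ Ico a b := ⟨ht.1, lt_of_le_of_ne ht.2 htb⟩
      have ha' : a ∈ Ico a b := ⟨le_refl a, hab⟩
      have : γ t = γ a := by rw [← h, hsb, ← hclose]
      have hta : t = a := hγinj ht' ha' this
      rw [hsb, hta, hclose']
  · rcases eq_or_ne t b with htb | htb
    · have hs' : s ∈ Ico a b := ⟨hs.1, lt_of_le_of_ne hs.2 hsb⟩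
      have ha' : a ∈ Ico a b := ⟨le_refl a, hab⟩
      have : γ s = γ a := by rw [h, htb, ← hclose]
      have hsa : s = a := hγinj hs' ha' this
      rw [hsa, htb, hclose']
    · exact absurd (hγinj ⟨hs.1, lt_of_le_of_ne hs.2 hsb⟩ ⟨ht.1, lt_of_le_of_ne ht.2 htb⟩ h)
        hst

lemma preimage_control (hab : a < b) (hγ : ContDiffOn ℝ 3 γ (Icc a b))
    (hγinj : Set.InjOn γ (Set.Ico a b)) (hclose : γ a = γ b)
    (hclose' : derivWithin γ (Icc a b) a = derivWithin γ (Icc a b) b)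
    {t : ℝ} (ht : t ∈ Icc a b) {η : ℝ} (hη : 0 < η) :
    ∃ ρ > 0, ∀ s ∈ Icc a b, ‖γ s - γ t‖ < ρ →
      ∃ t', t' ∈ Icc a b ∧ γ t' = γ t ∧
        derivWithin γ (Icc a b) t' = derivWithin γ (Icc a b) t ∧ |s - t'| < η := by
  classical
  set g := derivWithin γ (Icc a b) with hgdef
  set Tstar : Set ℝ := {t' ∈ Icc a b | γ t' = γ t ∧ g t' = g t} with hT
  set S : Set ℝ := {s ∈ Icc a b | ∀ t' ∈ Tstar, η ≤ |s - t'|} with hS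
  have hSclosed : IsClosed S := by
    have : S = Icc a b ∩ ⋂ t' ∈ Tstar, {s | η ≤ |s - t'|} := by
      ext s; simp [hS, mem_iInter]
    rw [this]
    refine isClosed_Icc.inter (isClosed_biInter fun t' _ => ?_)
    exact isClosed_le continuous_const (by continuity)
  have hScompact : IsCompact S := isCompact_Icc.of_isClosed_subset hSclosed (fun s hs => hs.1)
  have hSnotin : ∀ s ∈ S, γ s ≠ γ t := by
    intro s hs hcon
    have hgs : g s = g t := same_point hab hγinj hclose hclose' hs.1 ht hcon
    have : s ∈ Tstar := ⟨hs.1, hcon, hgs⟩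
    have := hs.2 s this
    simp at this
    linarith
  rcases S.eq_empty_or_nonempty with hSe | hSne
  · refine ⟨1, one_pos, fun s hs _ => ?_⟩
    have : s ∉ S := by rw [hSe]; exact notMem_empty s
    simp only [hS, mem_setOf_eq, not_and, not_forall] at this
    obtain ⟨t', ht', hlt⟩ := this hs
    exact ⟨t', ht'.1, ht'.2.1, ht'.2.2, not_le.1 hlt⟩
  · have hcont : ContinuousOn (fun s => ‖γ s - γ t‖) S := by
      have : ContinuousOn γ S := hγ.continuousOn.mono (fun s hs => hs.1)
      exact (this.sub continuousOn_const).norm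
    obtain ⟨s₀, hs₀S, hs₀min⟩ := hScompact.exists_isMinOn hSne hcont
    have hρpos : 0 < ‖γ s₀ - γ t‖ := by
      rcases eq_or_lt_of_le (norm_nonneg (γ s₀ - γ t)) with h | h
      · exfalso
        have h0 : γ s₀ - γ t = 0 := norm_eq_zero.1 h.symm
        exact hSnotin s₀ hs₀S (sub_eq_zero.1 h0)
      · exact h
    refine ⟨‖γ s₀ - γ t‖, hρpos, fun s hs hlt => ?_⟩
    have hsS : s ∉ S := by
      intro hsS
      have hle : ‖γ s₀ - γ t‖ ≤ ‖γ s - γ t‖ := hs₀min hsS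
      linarith
    simp only [hS, mem_setOf_eq, not_and, not_forall] at hsS
    obtain ⟨t', ht', hlt'⟩ := hsS hs
    exact ⟨t', ht'.1, ht'.2.1, ht'.2.2, not_le.1 hlt'⟩

set_option maxHeartbeats 1600000

/-- Identities (2.28)–(2.30): the field `ṽ(x) = x − p(x)` (with `p` the nearest-point
projection onto the circuit) is differentiable at points of the circuit, its derivative
kills the tangent direction and is the identity on the normal directions; hence its
divergence there is `n − 1` and its quadratic form is
`|η|² − (η·γ'(t))²/|γ'(t)|²`. -/
theorem derivative_of_nearest_point_field_on_circuit (n : ℕ) (hn : 3 ≤ n)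
    (a b : ℝ) (hab : a < b)
    (γ : ℝ → Euc n) (hγ : ContDiffOn ℝ 3 γ (Set.Icc a b))
    (hγ' : ∀ t ∈ Set.Icc a b, curveDeriv γ a b t ≠ 0)
    (hclose : γ a = γ b) (hclose' : curveDeriv γ a b a = curveDeriv γ a b b)
    (hγinj : Set.InjOn γ (Set.Ico a b))
    (ε : ℝ) (hε : 0 < ε) (pnear : Euc n → Euc n)
    (hpΓ : ∀ x ∈ distTube (γ '' Set.Icc a b) ε, pnear x ∈ γ '' Set.Icc a b)
    (hpdist : ∀ x ∈ distTube (γ '' Set.Icc a b) ε,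
      dist x (pnear x) = infDist x (γ '' Set.Icc a b))
    (hpuniq : ∀ x ∈ distTube (γ '' Set.Icc a b) ε, ∀ y ∈ γ '' Set.Icc a b,
      dist x y = infDist x (γ '' Set.Icc a b) → y = pnear x) :
    ∀ t ∈ Set.Icc a b, ∃ L : Euc n →L[ℝ] Euc n,
      HasFDerivAt (fun x => x - pnear x) L (γ t) ∧
      L (curveDeriv γ a b t) = 0 ∧
      (∀ ψ : Euc n, (inner ℝ ψ (curveDeriv γ a b t) : ℝ) = 0 → L ψ = ψ) ∧
      LinearMap.trace ℝ (Euc n) (L : Euc n →ₗ[ℝ] Euc n) = (n : ℝ) - 1 ∧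
      (∀ η : Euc n, (inner ℝ (L η) η : ℝ) =
        ‖η‖ ^ 2 - (inner ℝ η (curveDeriv γ a b t) : ℝ) ^ 2 / ‖curveDeriv γ a b t‖ ^ 2) := by

  intro t ht
  have hcd : ∀ u, curveDeriv γ a b u = derivWithin γ (Set.Icc a b) u := fun u => rfl
  set Γ : Set (Euc n) := γ '' Set.Icc a b with hΓdef
  set G : Euc n := derivWithin γ (Set.Icc a b) t with hGdef
  have hG : G ≠ 0 := hγ' t ht
  have hGnorm : (0:ℝ) < ‖G‖ := norm_pos_iff.2 hG
  set T : Euc n := ‖G‖⁻¹ • G with hTdef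
  set Q : Euc n →L[ℝ] Euc n := (innerSL ℝ T).smulRight T with hQdef
  set L : Euc n →L[ℝ] Euc n := ContinuousLinearMap.id ℝ (Euc n) - Q with hLdef
  have hγtΓ : γ t ∈ Γ := ⟨t, ht, rfl⟩
  have hfix : pnear (γ t) = γ t := by
    have htube : γ t ∈ distTube Γ ε := by
      simp only [distTube, mem_setOf_eq, infDist_zero_of_mem hγtΓ]; exact hε
    exact (hpuniq (γ t) htube (γ t) hγtΓ (by
      rw [dist_self, infDist_zero_of_mem hγtΓ])).symm
  obtain ⟨M, hM1, hMlip⟩ := exists_lip hab hγ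
  have hM0 : (0:ℝ) < M := by linarith
  have hTay : ∀ s ∈ Set.Icc a b, ∀ u ∈ Set.Icc a b,
      ‖γ s - γ u - (s - u) • derivWithin γ (Set.Icc a b) u‖ ≤ M * |s - u| ^ 2 :=
    fun s hs u hu => taylor_bound hab hγ hM1 hMlip hs hu
  have hη : (0:ℝ) < ‖G‖ / (2 * M) := by positivity
  obtain ⟨ρ, hρpos, hρ⟩ := preimage_control hab hγ hγinj hclose
    (by rw [← hcd, ← hcd]; exact hclose') ht hη
  set δ : ℝ := min (ρ / 2) ε with hδdef
  have hδpos : 0 < δ := lt_min (by linarith) hε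
  set C : ℝ := 36 * M / ‖G‖ ^ 2 with hCdef
  have hC0 : 0 < C := by positivity
  have key : ∀ x : Euc n, ‖x - γ t‖ < δ →
      ‖(x - pnear x) - L (x - γ t)‖ ≤ C * ‖x - γ t‖ ^ 2 := by
    intro x hx
    set r : ℝ := ‖x - γ t‖ with hrdef
    have hr0 : 0 ≤ r := norm_nonneg _
    have htube : x ∈ distTube Γ ε := by
      simp only [distTube, mem_setOf_eq]
      calc infDist x Γ ≤ dist x (γ t) := infDist_le_dist_of_mem hγtΓ
      _ = r := dist_eq_norm x (γ t)
      _ < δ := hx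
      _ ≤ ε := min_le_right _ _
    obtain ⟨s, hsK, hγs⟩ := hpΓ x htube
    have hvd : ‖x - pnear x‖ = infDist x Γ := by
      rw [← dist_eq_norm]; exact hpdist x htube
    have hvr : ‖x - pnear x‖ ≤ r := by
      rw [hvd]
      calc infDist x Γ ≤ dist x (γ t) := infDist_le_dist_of_mem hγtΓ
      _ = r := dist_eq_norm x (γ t)
    have hps : ‖γ s - γ t‖ ≤ 2 * r := by
      rw [hγs]
      calc ‖pnear x - γ t‖ ≤ ‖pnear x - x‖ + ‖x - γ t‖ := by
            have := norm_sub_le_norm_sub_add_norm_sub (pnear x) x (γ t)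
            simpa using this
      _ = ‖x - pnear x‖ + r := by rw [norm_sub_rev]
      _ ≤ r + r := by linarith
      _ = 2 * r := by ring
    have h2rρ : ‖γ s - γ t‖ < ρ := by
      have : (2:ℝ) * r < 2 * δ := by linarith
      have h2 : (2:ℝ) * δ ≤ ρ := by
        have := min_le_left (ρ / 2) ε
        simp only [← hδdef] at this
        linarith
      linarith
    obtain ⟨t', ht'K, hγt', hgt', hst'⟩ := hρ s hsK h2rρ
    have hgt'G : derivWithin γ (Set.Icc a b) t' = G := hgt'
    have hst'le : |s - t'| ≤ ‖derivWithin γ (Set.Icc a b) t'‖ / (2 * M) := by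
      rw [hgt'G]; exact le_of_lt hst'
    have hlow := lower_bound hM1 hTay hsK ht'K hst'le
    have hst'2 : |s - t'| ≤ 4 * r / ‖G‖ := by
      rw [hgt'G] at hlow
      have h1 : ‖γ s - γ t'‖ ≤ 2 * r := by rw [hγt']; exact hps
      rw [le_div_iff₀ hGnorm]
      nlinarith
    have hperp : (inner ℝ (x - pnear x) (derivWithin γ (Set.Icc a b) s) : ℝ) = 0 := by
      have hmin : ∀ u ∈ Set.Icc a b, ‖x - γ s‖ ≤ ‖x - γ u‖ := by
        intro u hu
        rw [hγs, hvd]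
        calc infDist x Γ ≤ dist x (γ u) := infDist_le_dist_of_mem ⟨u, hu, rfl⟩
        _ = ‖x - γ u‖ := dist_eq_norm _ _
      have := perp_min hab hγ hclose (by rw [← hcd, ← hcd]; exact hclose') x hsK hmin
      rwa [hγs] at this
    set v : Euc n := x - pnear x with hvdef
    set e₁ : Euc n := γ s - γ t' - (s - t') • derivWithin γ (Set.Icc a b) t' with he₁def
    have he₁ : ‖e₁‖ ≤ M * |s - t'| ^ 2 := hTay s hsK t' ht'K
    -- identity: (x - pnear x) - L (x - γ t) = (Q e₁ - e₁) + Q v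
    have hxsplit : x - γ t = (γ s - γ t') + v := by
      rw [hvdef, hγs, hγt']; abel
    have hQG : Q G = G := proj_tangent n G hG
    have hid : (x - pnear x) - L (x - γ t) = (Q e₁ - e₁) + Q v := by
      have h1 : L (x - γ t) = (x - γ t) - Q (x - γ t) := by
        simp [hLdef, ContinuousLinearMap.sub_apply]
      have h2 : Q (x - γ t) = Q (γ s - γ t') + Q v := by rw [hxsplit, map_add]
      have h3 : γ s - γ t' = (s - t') • G + e₁ := by rw [he₁def, hgt'G]; abel
      have h4 : Q (γ s - γ t') = (s - t') • G + Q e₁ := by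
        rw [h3, map_add, map_smul, hQG]
      have hpγt : pnear x - γ t = γ s - γ t' := by rw [← hγs, hγt']
      have hE : (x - pnear x) - L (x - γ t) = Q (x - γ t) - (pnear x - γ t) := by
        rw [h1]; abel
      rw [hE, h2, h4, hpγt, h3]
      abel
    have hQe₁ : ‖Q e₁ - e₁‖ ≤ 2 * (M * |s - t'| ^ 2) := by
      calc ‖Q e₁ - e₁‖ ≤ ‖Q e₁‖ + ‖e₁‖ := norm_sub_le _ _
      _ ≤ ‖e₁‖ + ‖e₁‖ := by
            have := proj_norm_le n G hG e₁
            rw [← hQdef] at this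
            linarith
      _ ≤ 2 * (M * |s - t'| ^ 2) := by linarith
    have hQv : ‖Q v‖ ≤ ‖G‖⁻¹ * (M * (4 * r / ‖G‖) * r) := by
      have hQva : Q v = (inner ℝ T v : ℝ) • T := by
        rw [hQdef]; exact proj_apply n G v
      have hTn : ‖T‖ = 1 := unit_norm n G hG
      have hiv : (inner ℝ T v : ℝ) = ‖G‖⁻¹ * (inner ℝ G v : ℝ) := by
        rw [hTdef, real_inner_smul_left]
      have hGv : (inner ℝ G v : ℝ) =
          (inner ℝ (derivWithin γ (Set.Icc a b) t' - derivWithin γ (Set.Icc a b) s) v : ℝ) := by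
        rw [inner_sub_left, hgt'G]
        rw [real_inner_comm (derivWithin γ (Set.Icc a b) s) v] at *
        rw [hperp]
        ring
      have habs : |(inner ℝ G v : ℝ)| ≤ M * (4 * r / ‖G‖) * r := by
        rw [hGv]
        calc |(inner ℝ (derivWithin γ (Set.Icc a b) t' - derivWithin γ (Set.Icc a b) s) v : ℝ)|
            ≤ ‖derivWithin γ (Set.Icc a b) t' - derivWithin γ (Set.Icc a b) s‖ * ‖v‖ :=
              abs_real_inner_le_norm _ _
        _ ≤ (M * |t' - s|) * ‖v‖ := by
              refine mul_le_mul_of_nonneg_right (hMlip t' ht'K s hsK) (norm_nonneg v)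
        _ ≤ (M * (4 * r / ‖G‖)) * r := by
              have h1 : |t' - s| ≤ 4 * r / ‖G‖ := by rw [abs_sub_comm]; exact hst'2
              have h2 : ‖v‖ ≤ r := hvr
              have h4 : 0 ≤ M * (4 * r / ‖G‖) :=
                mul_nonneg (le_of_lt hM0) (div_nonneg (by linarith) (norm_nonneg G))
              exact mul_le_mul (mul_le_mul_of_nonneg_left h1 (le_of_lt hM0)) h2
                (norm_nonneg v) h4
        _ = M * (4 * r / ‖G‖) * r := by ring
      rw [hQva, norm_smul, hTn, mul_one, Real.norm_eq_abs, hiv, abs_mul,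
        abs_of_nonneg (inv_nonneg.2 (le_of_lt hGnorm))]
      exact mul_le_mul_of_nonneg_left habs (inv_nonneg.2 (le_of_lt hGnorm))
    have hsum : ‖(x - pnear x) - L (x - γ t)‖
        ≤ 2 * (M * |s - t'| ^ 2) + ‖G‖⁻¹ * (M * (4 * r / ‖G‖) * r) := by
      rw [hid]
      calc ‖(Q e₁ - e₁) + Q v‖ ≤ ‖Q e₁ - e₁‖ + ‖Q v‖ := norm_add_le _ _
      _ ≤ _ := add_le_add hQe₁ hQv
    have hfinal : 2 * (M * |s - t'| ^ 2) + ‖G‖⁻¹ * (M * (4 * r / ‖G‖) * r) ≤ C * r ^ 2 := by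
      have h1 : |s - t'| ^ 2 ≤ (4 * r / ‖G‖) ^ 2 := by
        have := abs_nonneg (s - t')
        nlinarith
      have h2 : 2 * (M * |s - t'| ^ 2) ≤ 2 * (M * (4 * r / ‖G‖) ^ 2) := by nlinarith
      have heq : 2 * (M * (4 * r / ‖G‖) ^ 2) + ‖G‖⁻¹ * (M * (4 * r / ‖G‖) * r)
          = (36 * M / ‖G‖ ^ 2) * r ^ 2 := by
        field_simp
        ring
      rw [hCdef]
      linarith
    exact le_trans hsum hfinal
  refine ⟨L, ?_, ?_, ?_, ?_, ?_⟩
  · -- HasFDerivAt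
    rw [hasFDerivAt_iff_isLittleO]
    rw [Asymptotics.isLittleO_iff]
    intro c hc
    have hpos : 0 < min δ (c / C) := lt_min hδpos (by positivity)
    filter_upwards [Metric.ball_mem_nhds (γ t) hpos] with x hx
    rw [Metric.mem_ball, dist_eq_norm] at hx
    have hxδ : ‖x - γ t‖ < δ := lt_of_lt_of_le hx (min_le_left _ _)
    have hxc : ‖x - γ t‖ ≤ c / C := le_of_lt (lt_of_lt_of_le hx (min_le_right _ _))
    have hk := key x hxδ
    have : (x - pnear x) - (γ t - pnear (γ t)) - L (x - γ t)
        = (x - pnear x) - L (x - γ t) := by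
      rw [hfix]; abel
    rw [this]
    calc ‖(x - pnear x) - L (x - γ t)‖ ≤ C * ‖x - γ t‖ ^ 2 := hk
    _ = (C * ‖x - γ t‖) * ‖x - γ t‖ := by ring
    _ ≤ c * ‖x - γ t‖ := by
          refine mul_le_mul_of_nonneg_right ?_ (norm_nonneg _)
          calc C * ‖x - γ t‖ ≤ C * (c / C) := mul_le_mul_of_nonneg_left hxc (le_of_lt hC0)
          _ = c := by field_simp
  · -- L G = 0
    show L (curveDeriv γ a b t) = 0
    have : curveDeriv γ a b t = G := rfl
    rw [this]
    simp only [hLdef, ContinuousLinearMap.sub_apply, ContinuousLinearMap.id_apply]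
    rw [hQdef, proj_tangent n G hG, sub_self]
  · intro ψ hψ
    have hψ' : (inner ℝ ψ G : ℝ) = 0 := hψ
    simp only [hLdef, ContinuousLinearMap.sub_apply, ContinuousLinearMap.id_apply]
    rw [hQdef, proj_normal n G ψ hψ', sub_zero]
  · rw [hLdef, hQdef, hTdef]
    exact trace_proj n (‖G‖⁻¹ • G) (unit_norm n G hG)
  · intro η
    have : L η = η - Q η := by
      simp [hLdef, ContinuousLinearMap.sub_apply]
    rw [this, hQdef]
    exact proj_quad n G hG η
end
end

section
/- Let n ≥ 3, let γ̃ : [a,b] → ℝⁿ be a C³ curve with γ̃'(t) ≠ 0 for all t, γ̃(a) = γ̃(b), γ̃'(a) = γ̃'(b), and γ̃(t₁) ≠ γ̃(t₂) for t₁ ≠ t₂ in [a,b). Let ε̄₁ > 0 be such that every x ∈ T̃_{ε̄₁}(Γ̃) has a unique nearest point p(x) ∈ Γ̃, set ṽ(x) = x − p(x), and assume ṽ is C¹ on the closure of T̃_{ε'}(Γ̃) for some ε' ∈ (0, ε̄₁). Then lim_{ε→0⁺} sup{|n − 1 − div ṽ(x)| : x ∈ T̃_ε(Γ̃)} = 0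 and lim_{ε→0⁺} sup{dṽ(x)[η]·η : x ∈ T̃_ε(Γ̃), η ∈ ℝⁿ, |η| = 1} = 1, where dṽ(x) denotes the (Fréchet) derivative of ṽ at x and div ṽ its trace. -/
open Metric Set

noncomputable section

section Aux

variable {n : ℕ} {a b : ℝ} {γ : ℝ → Euc n}

lemma aux_inj (hab : a < b) (hγinj : Set.InjOn γ (Set.Ico a b)) (hclose : γ a = γ b) :
    ∀ t ∈ Set.Icc a b, ∀ s ∈ Set.Icc a b, γ t = γ s → t = s ∨ |t - s| = b - a := by
  intro t ht s hs hts
  rcases eq_or_lt_of_le ht.2 with htb | htb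
  · rcases eq_or_lt_of_le hs.2 with hsb | hsb
    · left; rw [htb, hsb]
    · have : a = s := hγinj (by exact ⟨le_refl a, hab⟩) ⟨hs.1, hsb⟩
        (by rw [hclose, ← htb, hts])
      right
      rw [htb, ← this, abs_of_nonneg (by linarith)]
  · rcases eq_or_lt_of_le hs.2 with hsb | hsb
    · have : t = a := hγinj ⟨ht.1, htb⟩ ⟨le_refl a, hab⟩ (by rw [hts, hsb, hclose])
      right
      rw [this, hsb, abs_of_nonpos (by linarith), neg_sub]
    · left; exact hγinj ⟨ht.1, htb⟩ ⟨hs.1, hsb⟩ hts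

lemma aux_loc (hab : a < b) (hγcont : ContinuousOn γ (Set.Icc a b))
    (hγinj : Set.InjOn γ (Set.Ico a b)) (hclose : γ a = γ b) :
    ∀ t₀ ∈ Set.Icc a b, ∀ ρ > 0, ∃ δ > 0, ∀ t ∈ Set.Icc a b,
      ‖γ t - γ t₀‖ < δ → |t - t₀| < ρ ∨ (b - a) - |t - t₀| < ρ := by
  intro t₀ ht₀ ρ hρ
  set S : Set ℝ := Set.Icc a b ∩ {t | ρ ≤ |t - t₀| ∧ |t - t₀| ≤ (b - a) - ρ} with hS
  have hclosed : IsClosed {t : ℝ | ρ ≤ |t - t₀| ∧ |t - t₀| ≤ (b - a) - ρ} := by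
    have hc : Continuous fun t : ℝ => |t - t₀| := (continuous_id.sub continuous_const).abs
    exact (isClosed_le continuous_const hc).inter (isClosed_le hc continuous_const)
  have hScompact : IsCompact S := isCompact_Icc.inter_right hclosed
  have hne : ∀ t ∈ S, γ t ≠ γ t₀ := by
    intro t htS heq
    rcases aux_inj hab hγinj hclose t htS.1 t₀ ht₀ heq with h | h
    · have := htS.2.1; rw [h, sub_self, abs_zero] at this; linarith
    · have := htS.2.2; rw [h] at this; linarith
  rcases S.eq_empty_or_nonempty with hSe | hSne
  · refine ⟨1, one_pos, fun t ht _ => ?_⟩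
    by_contra hcon
    push_neg at hcon
    have : t ∈ S := ⟨ht, hcon.1, by linarith [hcon.2]⟩
    rw [hSe] at this; exact this
  · have hcont : ContinuousOn (fun t => ‖γ t - γ t₀‖) S :=
      ((hγcont.mono Set.inter_subset_left).sub continuousOn_const).norm
    obtain ⟨z, hzS, hz⟩ := hScompact.exists_isMinOn hSne hcont
    refine ⟨‖γ z - γ t₀‖, ?_, fun t ht hlt => ?_⟩
    · exact norm_pos_iff.mpr (sub_ne_zero.mpr (hne z hzS))
    · by_contra hcon
      push_neg at hcon
      have htS : t ∈ S := ⟨ht, hcon.1, by linarith [hcon.2]⟩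
      have := hz htS
      simp only [Set.mem_setOf_eq] at this
      linarith

lemma aux_taylor (hab : a < b) (hγ : ContDiffOn ℝ 3 γ (Set.Icc a b)) :
    ∃ M : ℝ, 1 ≤ M ∧ ∀ t₀ ∈ Set.Icc a b, ∀ t ∈ Set.Icc a b,
      ‖derivWithin γ (Set.Icc a b) t - derivWithin γ (Set.Icc a b) t₀‖ ≤ M * |t - t₀| ∧
      ‖γ t - γ t₀ - (t - t₀) • derivWithin γ (Set.Icc a b) t₀‖ ≤ M * (t - t₀) ^ 2 := by
  have udiff : UniqueDiffOn ℝ (Set.Icc a b) := uniqueDiffOn_Icc hab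
  set g : ℝ → EuclideanSpace ℝ (Fin n) := derivWithin γ (Set.Icc a b) with hgdef
  have hγdiff : DifferentiableOn ℝ γ (Set.Icc a b) :=
    hγ.differentiableOn (by norm_num)
  have hg : ContDiffOn ℝ 2 g (Set.Icc a b) :=
    hγ.derivWithin udiff (by norm_num)
  have hgdiff : DifferentiableOn ℝ g (Set.Icc a b) := hg.differentiableOn (by norm_num)
  have hg2cont : ContinuousOn (derivWithin g (Set.Icc a b)) (Set.Icc a b) :=
    (ContDiffOn.derivWithin (m := 1) hg udiff (by norm_num)).continuousOn
  obtain ⟨C, hC⟩ := isCompact_Icc.exists_bound_of_continuousOn hg2cont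
  set M := max C 1 with hM
  have hM1 : (1:ℝ) ≤ M := le_max_right _ _
  have hLip : ∀ t₀ ∈ Set.Icc a b, ∀ t ∈ Set.Icc a b, ‖g t - g t₀‖ ≤ M * |t - t₀| := by
    intro t₀ ht₀ t ht
    have := (convex_Icc a b).norm_image_sub_le_of_norm_derivWithin_le (C := M) hgdiff
      (fun x hx => le_trans (hC x hx) (le_max_left C 1)) ht₀ ht
    rwa [Real.norm_eq_abs] at this
  refine ⟨M, hM1, fun t₀ ht₀ t ht => ⟨hLip t₀ ht₀ t ht, ?_⟩⟩
  have hsub : Set.uIcc t₀ t ⊆ Set.Icc a b := Set.uIcc_subset_Icc ht₀ ht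
  have hF : ∀ u ∈ Set.uIcc t₀ t,
      HasDerivWithinAt (fun u => γ u - u • g t₀) (g u - g t₀) (Set.uIcc t₀ t) u := by
    intro u hu
    have h1 : HasDerivWithinAt γ (g u) (Set.uIcc t₀ t) u :=
      ((hγdiff u (hsub hu)).hasDerivWithinAt).mono hsub
    have h2 : HasDerivWithinAt (fun u : ℝ => u • g t₀) (g t₀) (Set.uIcc t₀ t) u := by
      simpa using ((hasDerivAt_id u).smul_const (g t₀)).hasDerivWithinAt
    exact h1.sub h2
  have hbound : ∀ u ∈ Set.uIcc t₀ t, ‖g u - g t₀‖ ≤ M * |t - t₀| := by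
    intro u hu
    refine le_trans (hLip t₀ ht₀ u (hsub hu)) ?_
    have habs : |u - t₀| ≤ |t - t₀| := by
      rcases Set.mem_uIcc.mp hu with ⟨h1, h2⟩ | ⟨h1, h2⟩ <;> rw [abs_le] <;>
        constructor <;>
        linarith [le_abs_self (t - t₀), neg_abs_le (t - t₀), abs_nonneg (t - t₀)]
    exact mul_le_mul_of_nonneg_left habs (by linarith)
  have := (convex_uIcc t₀ t).norm_image_sub_le_of_norm_hasDerivWithin_le hF hbound
    (Set.left_mem_uIcc) (Set.right_mem_uIcc)
  calc ‖γ t - γ t₀ - (t - t₀) • g t₀‖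
      = ‖(γ t - t • g t₀) - (γ t₀ - t₀ • g t₀)‖ := by
        rw [sub_smul]
        have h : γ t - γ t₀ - (t • g t₀ - t₀ • g t₀)
            = γ t - t • g t₀ - (γ t₀ - t₀ • g t₀) := by abel
        rw [h]
    _ ≤ M * |t - t₀| * ‖t - t₀‖ := this
    _ = M * (t - t₀) ^ 2 := by rw [Real.norm_eq_abs, mul_assoc, ← abs_mul, ← sq, abs_sq]

lemma aux_perp (hab : a < b) (hγ : ContDiffOn ℝ 3 γ (Set.Icc a b))
    (hclose : γ a = γ b)
    (hclose' : derivWithin γ (Set.Icc a b) a = derivWithin γ (Set.Icc a b) b)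
    {εbar₁ : ℝ} {pnear : EuclideanSpace ℝ (Fin n) → EuclideanSpace ℝ (Fin n)}
    (hpdist : ∀ x ∈ distTube (γ '' Set.Icc a b) εbar₁,
      dist x (pnear x) = infDist x (γ '' Set.Icc a b)) :
    ∀ x ∈ distTube (γ '' Set.Icc a b) εbar₁, ∀ t ∈ Set.Icc a b, γ t = pnear x →
      (inner ℝ (x - γ t) (derivWithin γ (Set.Icc a b) t) : ℝ) = 0 := by
  intro x hx t ht hfoot
  set g : ℝ → EuclideanSpace ℝ (Fin n) := derivWithin γ (Set.Icc a b) with hg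
  set h : ℝ → ℝ := fun u => (inner ℝ (x - γ u) (x - γ u) : ℝ) with hh
  set d : ℝ → ℝ := fun u =>
    (inner ℝ (x - γ u) (-g u) : ℝ) + (inner ℝ (-g u) (x - γ u) : ℝ) with hd
  have hγdiff : DifferentiableOn ℝ γ (Set.Icc a b) := hγ.differentiableOn (by norm_num)
  have hderiv : ∀ u ∈ Set.Icc a b, HasDerivWithinAt h (d u) (Set.Icc a b) u := by
    intro u hu
    have h1 : HasDerivWithinAt (fun u => x - γ u) (-g u) (Set.Icc a b) u := by
      exact ((hasDerivWithinAt_const u (Set.Icc a b) x).sub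
        (hγdiff u hu).hasDerivWithinAt).congr_deriv (zero_sub _)
    exact h1.inner ℝ h1
  have hmin : ∀ u ∈ Set.Icc a b, γ u = γ t → IsMinOn h (Set.Icc a b) u := by
    intro u hu huv
    intro s hs
    simp only [Set.mem_setOf_eq, hh]
    rw [real_inner_self_eq_norm_sq, real_inner_self_eq_norm_sq]
    have h1 : ‖x - γ u‖ ≤ ‖x - γ s‖ := by
      rw [huv, hfoot, ← dist_eq_norm, ← dist_eq_norm]
      rw [hpdist x hx]
      exact infDist_le_dist_of_mem ⟨s, hs, rfl⟩
    have h2 : (0:ℝ) ≤ ‖x - γ u‖ := norm_nonneg _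
    nlinarith
  have key : ∀ u ∈ Set.Icc a b, γ u = γ t →
      0 ≤ (b - u) * d u ∧ 0 ≤ (a - u) * d u := by
    intro u hu huv
    have hlmin : IsLocalMinOn h (Set.Icc a b) u := (hmin u hu huv).localize
    have hfd : HasFDerivWithinAt h
        ((ContinuousLinearMap.id ℝ ℝ).smulRight (d u)) (Set.Icc a b) u :=
      (hderiv u hu).hasFDerivWithinAt
    constructor
    · have hcone : b - u ∈ posTangentConeAt (Set.Icc a b) u :=
        sub_mem_posTangentConeAt_of_segment_subset
          (by rw [segment_eq_Icc hu.2]; exact Set.Icc_subset_Icc hu.1 le_rfl)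
      simpa using hlmin.hasFDerivWithinAt_nonneg hfd hcone
    · have hcone : a - u ∈ posTangentConeAt (Set.Icc a b) u :=
        sub_mem_posTangentConeAt_of_segment_subset
          (by rw [segment_symm, segment_eq_Icc hu.1]; exact Set.Icc_subset_Icc le_rfl hu.2)
      simpa using hlmin.hasFDerivWithinAt_nonneg hfd hcone
  have hdval : ∀ u, d u = -2 * (inner ℝ (x - γ u) (g u) : ℝ) := by
    intro u
    simp only [hd, inner_neg_right, inner_neg_left, real_inner_comm (g u) (x - γ u)]
    ring
  have hdt : d t = 0 := by
    rcases eq_or_lt_of_le ht.1 with hta | hta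
    · -- t = a : use both a and b as minimizers
      have h1 := (key t ht rfl).1
      have h2 := (key b (Set.right_mem_Icc.mpr hab.le) (by rw [← hta, hclose])).2
      have hdb : d b = d t := by
        rw [hdval, hdval, ← hta, ← hclose, ← hclose']
      rw [hdb] at h2
      rw [← hta] at h1 h2 ⊢
      nlinarith
    · rcases eq_or_lt_of_le ht.2 with htb | htb
      · have h1 := (key t ht rfl).2
        have h2 := (key a (Set.left_mem_Icc.mpr hab.le) (by rw [htb, hclose])).1
        have hda : d a = d t := by
          rw [hdval, hdval, htb, ← hclose, ← hclose']
        rw [hda] at h2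
        rw [htb] at h1 h2 ⊢
        nlinarith
      · have h1 := (key t ht rfl).1
        have h2 := (key t ht rfl).2
        nlinarith
  rw [hdval t] at hdt
  linarith

set_option maxHeartbeats 1000000 in
lemma aux_key (hab : a < b) (hγ : ContDiffOn ℝ 3 γ (Set.Icc a b))
    {t₀ : ℝ} (ht₀ : t₀ ∈ Set.Icc a b) (ht₀' : derivWithin γ (Set.Icc a b) t₀ ≠ 0)
    {η : EuclideanSpace ℝ (Fin n)} (hη : (inner ℝ η (derivWithin γ (Set.Icc a b) t₀) : ℝ) = 0) :
    ∃ ρ > 0, ∃ s₀ > 0, ∀ s : ℝ, |s| ≤ s₀ → ∀ t ∈ Set.Icc a b, |t - t₀| < ρ →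
      (inner ℝ ((γ t₀ + s • η) - γ t) (derivWithin γ (Set.Icc a b) t) : ℝ) = 0 → t = t₀ := by
  obtain ⟨M, hM1, hTay⟩ := aux_taylor hab hγ
  set g : ℝ → EuclideanSpace ℝ (Fin n) := derivWithin γ (Set.Icc a b) with hgdef
  set T : EuclideanSpace ℝ (Fin n) := g t₀ with hT
  set Tn : ℝ := ‖T‖ with hTn
  set e : ℝ := ‖η‖ with he
  set c₀ : ℝ := Tn ^ 2 with hc₀
  have hc₀pos : 0 < c₀ := by
    have : T ≠ 0 := ht₀'
    have : 0 < Tn := norm_pos_iff.mpr this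
    positivity
  have hMpos : (0:ℝ) < M := by linarith
  have hTnn : (0:ℝ) ≤ Tn := norm_nonneg _
  have henn : (0:ℝ) ≤ e := norm_nonneg _
  set ρ : ℝ := min 1 (c₀ / (4 * M * (2 * Tn + M))) with hρdef
  set s₀ : ℝ := c₀ / (4 * M * (e + 1)) with hs₀def
  have hden1 : (0:ℝ) < 4 * M * (2 * Tn + M) := by positivity
  have hden2 : (0:ℝ) < 4 * M * (e + 1) := by positivity
  have hρpos : 0 < ρ := lt_min one_pos (div_pos hc₀pos hden1)
  have hs₀pos : 0 < s₀ := div_pos hc₀pos hden2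
  refine ⟨ρ, hρpos, s₀, hs₀pos, fun s hs t ht htρ hperp => ?_⟩
  by_contra hne
  set u : ℝ := t - t₀ with hu
  have hune : u ≠ 0 := sub_ne_zero.mpr hne
  have hm : 0 < |u| := abs_pos.mpr hune
  set R₁ : EuclideanSpace ℝ (Fin n) := γ t - γ t₀ - u • T with hR₁def
  set R₂ : EuclideanSpace ℝ (Fin n) := g t - T with hR₂def
  have hR1 : ‖R₁‖ ≤ M * u ^ 2 := (hTay t₀ ht₀ t ht).2
  have hR2 : ‖R₂‖ ≤ M * |u| := (hTay t₀ ht₀ t ht).1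
  have hvec : (γ t₀ + s • η) - γ t = s • η - u • T - R₁ := by
    simp only [hR₁def]; abel
  have hgt : g t = T + R₂ := by simp only [hR₂def]; abel
  have heq : (0:ℝ) = s * (inner ℝ η R₂ : ℝ) - u * c₀ - u * (inner ℝ T R₂ : ℝ)
      - (inner ℝ R₁ T : ℝ) - (inner ℝ R₁ R₂ : ℝ) := by
    rw [← hperp, hvec, hgt]
    simp only [inner_sub_left, inner_add_right, real_inner_smul_left,
      real_inner_self_eq_norm_sq, hη]
    rw [← hTn, ← hc₀]
    ring
  have heq2 : u * c₀ = s * (inner ℝ η R₂ : ℝ) - u * (inner ℝ T R₂ : ℝ)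
      - (inner ℝ R₁ T : ℝ) - (inner ℝ R₁ R₂ : ℝ) := by linarith
  have hb1 : |(inner ℝ η R₂ : ℝ)| ≤ e * (M * |u|) :=
    (abs_real_inner_le_norm η R₂).trans (mul_le_mul_of_nonneg_left hR2 henn)
  have hb2 : |(inner ℝ T R₂ : ℝ)| ≤ Tn * (M * |u|) :=
    (abs_real_inner_le_norm T R₂).trans (mul_le_mul_of_nonneg_left hR2 hTnn)
  have hb3 : |(inner ℝ R₁ T : ℝ)| ≤ (M * u ^ 2) * Tn :=
    (abs_real_inner_le_norm R₁ T).trans (mul_le_mul_of_nonneg_right hR1 hTnn)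
  have hb4 : |(inner ℝ R₁ R₂ : ℝ)| ≤ (M * u ^ 2) * (M * |u|) :=
    (abs_real_inner_le_norm R₁ R₂).trans
      (mul_le_mul hR1 hR2 (norm_nonneg _) (by positivity))
  have htri : |u * c₀| ≤ |s * (inner ℝ η R₂ : ℝ)| + |u * (inner ℝ T R₂ : ℝ)|
      + |(inner ℝ R₁ T : ℝ)| + |(inner ℝ R₁ R₂ : ℝ)| := by
    rw [heq2]
    calc |s * (inner ℝ η R₂ : ℝ) - u * (inner ℝ T R₂ : ℝ) - (inner ℝ R₁ T : ℝ) - (inner ℝ R₁ R₂ : ℝ)|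
        ≤ |s * (inner ℝ η R₂ : ℝ) - u * (inner ℝ T R₂ : ℝ) - (inner ℝ R₁ T : ℝ)| + |(inner ℝ R₁ R₂ : ℝ)| :=
          abs_sub _ _
      _ ≤ |s * (inner ℝ η R₂ : ℝ) - u * (inner ℝ T R₂ : ℝ)| + |(inner ℝ R₁ T : ℝ)| + |(inner ℝ R₁ R₂ : ℝ)| := by
          gcongr
          exact abs_sub _ _
      _ ≤ |s * (inner ℝ η R₂ : ℝ)| + |u * (inner ℝ T R₂ : ℝ)| + |(inner ℝ R₁ T : ℝ)| + |(inner ℝ R₁ R₂ : ℝ)| := by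
          gcongr
          exact abs_sub _ _
  have hfinal : |u| * c₀ ≤ s₀ * (e * (M * |u|)) + |u| * (Tn * (M * |u|))
      + (M * u ^ 2) * Tn + (M * u ^ 2) * (M * |u|) := by
    have h1 : |u * c₀| = |u| * c₀ := by rw [abs_mul, abs_of_nonneg hc₀pos.le]
    have h2 : |s * (inner ℝ η R₂ : ℝ)| ≤ s₀ * (e * (M * |u|)) := by
      rw [abs_mul]
      exact mul_le_mul hs hb1 (abs_nonneg _) hs₀pos.le
    have h3 : |u * (inner ℝ T R₂ : ℝ)| ≤ |u| * (Tn * (M * |u|)) := by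
      rw [abs_mul]
      exact mul_le_mul_of_nonneg_left hb2 (abs_nonneg _)
    linarith [htri, h2, h3, hb3, hb4, h1.symm.le, h1.le]
  -- divide by |u| and contradict
  have hsq : u ^ 2 = |u| * |u| := by rw [← abs_mul, abs_mul_self u]; ring
  have hρ1 : ρ ≤ 1 := min_le_left _ _
  have hρ2 : ρ * (4 * M * (2 * Tn + M)) ≤ c₀ := by
    have := min_le_right 1 (c₀ / (4 * M * (2 * Tn + M)))
    calc ρ * (4 * M * (2 * Tn + M)) ≤ (c₀ / (4 * M * (2 * Tn + M))) * (4 * M * (2 * Tn + M)) :=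
          mul_le_mul_of_nonneg_right this hden1.le
      _ = c₀ := div_mul_cancel₀ _ hden1.ne'
  have hs₀e : s₀ * (4 * M * (e + 1)) = c₀ := div_mul_cancel₀ _ hden2.ne'
  have hmρ : |u| < ρ := htρ
  have hcancel : c₀ ≤ s₀ * (e * M) + Tn * (M * |u|) + M * |u| * Tn + M * |u| * (M * |u|) := by
    have hstep : |u| * c₀ ≤ |u| * (s₀ * (e * M) + Tn * (M * |u|) + M * |u| * Tn + M * |u| * (M * |u|)) := by
      rw [hsq] at hfinal
      nlinarith [hfinal]
    exact le_of_mul_le_mul_left (by linarith [hstep]) hm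
  have hA : s₀ * (e * M) ≤ c₀ / 4 := by
    nlinarith [hs₀e, hs₀pos, hMpos, henn]
  have hB : Tn * (M * |u|) + M * |u| * Tn + M * |u| * (M * |u|) ≤ c₀ / 4 := by
    have e1 : Tn * (M * |u|) ≤ Tn * (M * ρ) := by gcongr
    have e2 : M * |u| * Tn ≤ M * ρ * Tn := by gcongr
    have e3 : M * |u| * (M * |u|) ≤ M * ρ * (M * ρ) := by gcongr
    have e4 : M * ρ * (M * ρ) ≤ M * ρ * (M * 1) := by gcongr
    nlinarith [hρ2]
  linarith [hcancel, hA, hB, hc₀pos]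

set_option maxHeartbeats 1000000 in
lemma aux_foot (hab : a < b) (hγ : ContDiffOn ℝ 3 γ (Set.Icc a b))
    (hγ' : ∀ t ∈ Set.Icc a b, derivWithin γ (Set.Icc a b) t ≠ 0)
    (hclose : γ a = γ b)
    (hclose' : derivWithin γ (Set.Icc a b) a = derivWithin γ (Set.Icc a b) b)
    (hγinj : Set.InjOn γ (Set.Ico a b))
    {εbar₁ : ℝ} (hεbar₁ : 0 < εbar₁)
    {pnear : EuclideanSpace ℝ (Fin n) → EuclideanSpace ℝ (Fin n)}
    (hpΓ : ∀ x ∈ distTube (γ '' Set.Icc a b) εbar₁, pnear x ∈ γ '' Set.Icc a b)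
    (hpdist : ∀ x ∈ distTube (γ '' Set.Icc a b) εbar₁,
      dist x (pnear x) = infDist x (γ '' Set.Icc a b))
    {t₀ : ℝ} (ht₀ : t₀ ∈ Set.Icc a b)
    {η : EuclideanSpace ℝ (Fin n)}
    (hη : (inner ℝ η (derivWithin γ (Set.Icc a b) t₀) : ℝ) = 0) :
    ∃ s₀ > 0, ∀ s : ℝ, |s| < s₀ → pnear (γ t₀ + s • η) = γ t₀ := by
  set g : ℝ → EuclideanSpace ℝ (Fin n) := derivWithin γ (Set.Icc a b) with hgdef
  -- reduce to t₀ ∈ Ico a b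
  have main : ∀ t₁ ∈ Set.Ico a b, (inner ℝ η (g t₁) : ℝ) = 0 →
      ∃ s₀ > 0, ∀ s : ℝ, |s| < s₀ → pnear (γ t₁ + s • η) = γ t₁ := by
    intro t₁ ht₁ hη₁
    have ht₁' : t₁ ∈ Set.Icc a b := ⟨ht₁.1, ht₁.2.le⟩
    obtain ⟨ρ₁, hρ₁, s₁, hs₁, hkey₁⟩ := aux_key hab hγ ht₁' (hγ' t₁ ht₁') hη₁
    -- choose ρ
    have hbmem : b ∈ Set.Icc a b := Set.right_mem_Icc.mpr hab.le
    by_cases hta : t₁ = a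
    · -- endpoint case, also key at b
      have hηb : (inner ℝ η (g b) : ℝ) = 0 := by
        rw [← hclose']; rw [hta] at hη₁; exact hη₁
      obtain ⟨ρ₂, hρ₂, s₂, hs₂, hkey₂⟩ := aux_key hab hγ hbmem (hγ' b hbmem) hηb
      set ρ := min ρ₁ ρ₂ with hρdef
      have hρpos : 0 < ρ := lt_min hρ₁ hρ₂
      obtain ⟨δ, hδpos, hloc⟩ := aux_loc hab (hγ.continuousOn) hγinj hclose t₁ ht₁' ρ hρpos
      set s₀ := min (min s₁ s₂) (min (δ / (2 * ‖η‖ + 1)) (εbar₁ / (‖η‖ + 1))) with hs₀def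
      have hs₀pos : 0 < s₀ := by
        apply lt_min (lt_min hs₁ hs₂)
        apply lt_min <;> positivity
      refine ⟨s₀, hs₀pos, fun s hss => ?_⟩
      set x := γ t₁ + s • η with hxdef
      have hdx : dist x (γ t₁) = |s| * ‖η‖ := by
        rw [dist_eq_norm]
        simp [hxdef, norm_smul]
      have hΓmem : γ t₁ ∈ γ '' Set.Icc a b := ⟨t₁, ht₁', rfl⟩
      have hsmall : |s| * ‖η‖ < εbar₁ := by
        have h1 : |s| < εbar₁ / (‖η‖ + 1) :=
          lt_of_lt_of_le hss (le_trans (min_le_right _ _) (min_le_right _ _))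
        have : |s| * (‖η‖ + 1) < εbar₁ := by
          rw [lt_div_iff₀ (by positivity)] at h1
          exact h1
        nlinarith [abs_nonneg s]
      have hxtube : x ∈ distTube (γ '' Set.Icc a b) εbar₁ :=
        lt_of_le_of_lt ((infDist_le_dist_of_mem hΓmem).trans_eq hdx) hsmall
      obtain ⟨ts, hts, htseq⟩ := hpΓ x hxtube
      have hperp := aux_perp hab hγ hclose hclose' hpdist x hxtube ts hts htseq
      have hnear : ‖γ ts - γ t₁‖ < δ := by
        have h1 : ‖γ ts - x‖ = dist x (pnear x) := by
          rw [dist_eq_norm, htseq, norm_sub_rev]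
        have h2 : ‖γ ts - x‖ ≤ |s| * ‖η‖ := by
          rw [h1, hpdist x hxtube, ← hdx]
          exact infDist_le_dist_of_mem hΓmem
        have h3 : |s| < δ / (2 * ‖η‖ + 1) :=
          lt_of_lt_of_le hss (le_trans (min_le_right _ _) (min_le_left _ _))
        have h4 : |s| * (2 * ‖η‖ + 1) < δ := by
          rw [lt_div_iff₀ (by positivity)] at h3; exact h3
        calc ‖γ ts - γ t₁‖ ≤ ‖γ ts - x‖ + ‖x - γ t₁‖ := by
              rw [← dist_eq_norm, ← dist_eq_norm]; exact dist_triangle _ _ _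
          _ ≤ |s| * ‖η‖ + |s| * ‖η‖ := by
              have h5 : ‖x - γ t₁‖ = |s| * ‖η‖ := by rw [← dist_eq_norm]; exact hdx
              linarith [h2, h5]
          _ < δ := by nlinarith [abs_nonneg s]
      have hss₁ : |s| ≤ s₁ := le_trans hss.le (le_trans (min_le_left _ _) (min_le_left _ _))
      have hss₂ : |s| ≤ s₂ := le_trans hss.le (le_trans (min_le_left _ _) (min_le_right _ _))
      rcases hloc ts hts hnear with hcase | hcase
      · have : ts = t₁ := hkey₁ s hss₁ ts hts (lt_of_lt_of_le hcase (min_le_left _ _)) (by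
          rw [← hxdef]; exact hperp)
        rw [← htseq, this]
      · -- wrap-around: ts is near b, t₁ = a
        have htsb : |ts - b| < ρ₂ := by
          rw [hta] at hcase
          have h5 : (b - a) - |ts - a| < ρ := hcase
          have h6 : |ts - a| = ts - a := abs_of_nonneg (by linarith [hts.1])
          have h7 : ρ ≤ ρ₂ := min_le_right _ _
          rw [abs_of_nonpos (by linarith [hts.2])]
          rw [h6] at h5
          linarith
        have hxb : x = γ b + s • η := by rw [hxdef, hta, hclose]
        have : ts = b := hkey₂ s hss₂ ts hts htsb (by rw [← hxb]; exact hperp)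
        rw [← htseq, this, ← hclose, ← hta]
    · -- interior case
      have hta' : a < t₁ := lt_of_le_of_ne ht₁.1 (Ne.symm hta)
      set ρ := min ρ₁ (min (t₁ - a) (b - t₁)) with hρdef
      have hρpos : 0 < ρ := lt_min hρ₁ (lt_min (by linarith) (by linarith [ht₁.2]))
      obtain ⟨δ, hδpos, hloc⟩ := aux_loc hab (hγ.continuousOn) hγinj hclose t₁ ht₁' ρ hρpos
      set s₀ := min s₁ (min (δ / (2 * ‖η‖ + 1)) (εbar₁ / (‖η‖ + 1))) with hs₀def
      have hs₀pos : 0 < s₀ := by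
        apply lt_min hs₁
        apply lt_min <;> positivity
      refine ⟨s₀, hs₀pos, fun s hss => ?_⟩
      set x := γ t₁ + s • η with hxdef
      have hdx : dist x (γ t₁) = |s| * ‖η‖ := by
        rw [dist_eq_norm]
        simp [hxdef, norm_smul]
      have hΓmem : γ t₁ ∈ γ '' Set.Icc a b := ⟨t₁, ht₁', rfl⟩
      have hsmall : |s| * ‖η‖ < εbar₁ := by
        have h1 : |s| < εbar₁ / (‖η‖ + 1) :=
          lt_of_lt_of_le hss (le_trans (min_le_right _ _) (min_le_right _ _))
        have : |s| * (‖η‖ + 1) < εbar₁ := by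
          rw [lt_div_iff₀ (by positivity)] at h1
          exact h1
        nlinarith [abs_nonneg s]
      have hxtube : x ∈ distTube (γ '' Set.Icc a b) εbar₁ :=
        lt_of_le_of_lt ((infDist_le_dist_of_mem hΓmem).trans_eq hdx) hsmall
      obtain ⟨ts, hts, htseq⟩ := hpΓ x hxtube
      have hperp := aux_perp hab hγ hclose hclose' hpdist x hxtube ts hts htseq
      have hnear : ‖γ ts - γ t₁‖ < δ := by
        have h1 : ‖γ ts - x‖ = dist x (pnear x) := by
          rw [dist_eq_norm, htseq, norm_sub_rev]
        have h2 : ‖γ ts - x‖ ≤ |s| * ‖η‖ := by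
          rw [h1, hpdist x hxtube, ← hdx]
          exact infDist_le_dist_of_mem hΓmem
        have h3 : |s| < δ / (2 * ‖η‖ + 1) :=
          lt_of_lt_of_le hss (le_trans (min_le_right _ _) (min_le_left _ _))
        have h4 : |s| * (2 * ‖η‖ + 1) < δ := by
          rw [lt_div_iff₀ (by positivity)] at h3; exact h3
        calc ‖γ ts - γ t₁‖ ≤ ‖γ ts - x‖ + ‖x - γ t₁‖ := by
              rw [← dist_eq_norm, ← dist_eq_norm]; exact dist_triangle _ _ _
          _ ≤ |s| * ‖η‖ + |s| * ‖η‖ := by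
              have h5 : ‖x - γ t₁‖ = |s| * ‖η‖ := by rw [← dist_eq_norm]; exact hdx
              linarith [h2, h5]
          _ < δ := by nlinarith [abs_nonneg s]
      have hss₁ : |s| ≤ s₁ := le_trans hss.le (min_le_left _ _)
      rcases hloc ts hts hnear with hcase | hcase
      · have : ts = t₁ := hkey₁ s hss₁ ts hts (lt_of_lt_of_le hcase (min_le_left _ _)) (by
          rw [← hxdef]; exact hperp)
        rw [← htseq, this]
      · exfalso
        have h7 : ρ ≤ t₁ - a := le_trans (min_le_right _ _) (min_le_left _ _)
        have h8 : ρ ≤ b - t₁ := le_trans (min_le_right _ _) (min_le_right _ _)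
        rcases abs_cases (ts - t₁) with ⟨habs, _⟩ | ⟨habs, _⟩ <;>
          rw [habs] at hcase <;> linarith [hts.1, hts.2]
  rcases eq_or_lt_of_le ht₀.2 with htb | htb
  · have hηa : (inner ℝ η (g a) : ℝ) = 0 := by rw [hclose']; rw [htb] at hη; exact hη
    obtain ⟨s₀, hs₀, hfoot⟩ := main a ⟨le_refl a, hab⟩ hηa
    refine ⟨s₀, hs₀, fun s hss => ?_⟩
    have := hfoot s hss
    rw [htb, ← hclose]
    exact this
  · exact main t₀ ⟨ht₀.1, htb⟩ hη

end Aux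

/-- the projection onto the orthogonal complement of the line spanned by a unit
vector `e`, written as `id - e⊗e`. -/
noncomputable def projA {n : ℕ} (e : Euc n) : Euc n →L[ℝ] Euc n :=
  ContinuousLinearMap.id ℝ (Euc n) - (innerSL ℝ e).smulRight e

section LinAlg

variable {n : ℕ}

lemma projA_apply (e x : EuclideanSpace ℝ (Fin n)) :
    projA e x = x - (inner ℝ e x : ℝ) • e := rfl

lemma aux_proj {T : EuclideanSpace ℝ (Fin n)} (hT : T ≠ 0)
    {D : EuclideanSpace ℝ (Fin n) →L[ℝ] EuclideanSpace ℝ (Fin n)}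
    (htan : D T = 0) (hnor : ∀ η, (inner ℝ η T : ℝ) = 0 → D η = η) :
    D = projA (‖T‖⁻¹ • T) := by
  ext y
  set e : EuclideanSpace ℝ (Fin n) := ‖T‖⁻¹ • T with he
  have hTn : ‖T‖ ≠ 0 := norm_ne_zero_iff.mpr hT
  set c : ℝ := (inner ℝ e y : ℝ) with hc
  set w : EuclideanSpace ℝ (Fin n) := y - c • e with hw
  have hwperp : (inner ℝ w T : ℝ) = 0 := by
    rw [hw, inner_sub_left, real_inner_smul_left, hc, he, real_inner_smul_left,
      real_inner_smul_left]
    rw [real_inner_self_eq_norm_sq, real_inner_comm T y]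
    field_simp
    ring
  have hDy : D y = w := by
    have hy : y = w + (c * ‖T‖⁻¹) • T := by
      rw [hw, he]; rw [smul_smul]; abel
    rw [hy, map_add, hnor w hwperp, map_smul, htan, smul_zero, add_zero]
  rw [hDy, projA_apply, ← hc, ← hw]

lemma aux_traceA {e : EuclideanSpace ℝ (Fin n)} (he : ‖e‖ = 1) :
    LinearMap.trace ℝ (EuclideanSpace ℝ (Fin n))
      (projA e : EuclideanSpace ℝ (Fin n) →ₗ[ℝ] EuclideanSpace ℝ (Fin n)) = n - 1 := by
  classical
  set b := (EuclideanSpace.basisFun (Fin n) ℝ).toBasis with hb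
  rw [LinearMap.trace_eq_matrix_trace ℝ b]
  rw [Matrix.trace]
  have hdiag : ∀ i, (LinearMap.toMatrix b b (projA e : EuclideanSpace ℝ (Fin n) →ₗ[ℝ] EuclideanSpace ℝ (Fin n))) i i
      = 1 - e i * e i := by
    intro i
    rw [LinearMap.toMatrix_apply]
    have hrepr : ∀ x : EuclideanSpace ℝ (Fin n), b.repr x i = x i := fun x => by
      simp [hb]
    have hbi : (b i : EuclideanSpace ℝ (Fin n)) = EuclideanSpace.single i 1 := by
      simp [hb, EuclideanSpace.basisFun_apply]
    rw [hrepr]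
    show (projA e (b i)) i = 1 - e i * e i
    rw [projA_apply]
    have h1 : (inner ℝ e (b i) : ℝ) = e i := by
      rw [hbi]
      simp [EuclideanSpace.inner_single_right]
    rw [h1]
    have h2 : (b i : EuclideanSpace ℝ (Fin n)) i = 1 := by rw [hbi]; simp
    have h3 : ((e i • e : EuclideanSpace ℝ (Fin n))) i = e i * e i := rfl
    show (b i : EuclideanSpace ℝ (Fin n)) i - (e i • e : EuclideanSpace ℝ (Fin n)) i = 1 - e i * e i
    rw [h2, h3]
  simp only [Matrix.diag_apply, hdiag]
  rw [Finset.sum_sub_distrib]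
  have hsum : ∑ i : Fin n, e i * e i = 1 := by
    have : (inner ℝ e e : ℝ) = 1 := by
      rw [real_inner_self_eq_norm_sq, he]; norm_num
    rw [← this, PiLp.inner_apply]
    simp [RCLike.inner_apply, conj_trivial, sq]
  rw [hsum]
  simp

lemma aux_quadA {e : EuclideanSpace ℝ (Fin n)} (η : EuclideanSpace ℝ (Fin n)) :
    (inner ℝ (projA e η) η : ℝ) = ‖η‖ ^ 2 - (inner ℝ e η : ℝ) ^ 2 := by
  rw [projA_apply, inner_sub_left, real_inner_smul_left, real_inner_self_eq_norm_sq,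
    real_inner_comm η e]
  ring

lemma aux_coord_le_norm (x : EuclideanSpace ℝ (Fin n)) (i : Fin n) : |x i| ≤ ‖x‖ := by
  have h1 : (inner ℝ (EuclideanSpace.single i (1:ℝ)) x : ℝ) = x i := by
    simp [EuclideanSpace.inner_single_left]
  have h2 := abs_real_inner_le_norm (EuclideanSpace.single i (1:ℝ)) x
  rw [h1, EuclideanSpace.norm_single] at h2
  simpa using h2

lemma aux_trace_bound (B : EuclideanSpace ℝ (Fin n) →L[ℝ] EuclideanSpace ℝ (Fin n)) :
    |LinearMap.trace ℝ (EuclideanSpace ℝ (Fin n))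
      (B : EuclideanSpace ℝ (Fin n) →ₗ[ℝ] EuclideanSpace ℝ (Fin n))| ≤ n * ‖B‖ := by
  classical
  set b := (EuclideanSpace.basisFun (Fin n) ℝ).toBasis with hb
  rw [LinearMap.trace_eq_matrix_trace ℝ b, Matrix.trace]
  have hdiag : ∀ i : Fin n, |(LinearMap.toMatrix b b
      (B : EuclideanSpace ℝ (Fin n) →ₗ[ℝ] EuclideanSpace ℝ (Fin n))).diag i| ≤ ‖B‖ := by
    intro i
    rw [Matrix.diag_apply, LinearMap.toMatrix_apply]
    have hrepr : ∀ x : EuclideanSpace ℝ (Fin n), b.repr x i = x i := fun x => by simp [hb]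
    rw [hrepr]
    refine le_trans (aux_coord_le_norm _ i) ?_
    refine le_trans (B.le_opNorm _) ?_
    have : ‖(b i : EuclideanSpace ℝ (Fin n))‖ = 1 := by
      simp [hb, EuclideanSpace.basisFun_apply, EuclideanSpace.norm_single]
    rw [this, mul_one]
  calc |∑ i : Fin n, (LinearMap.toMatrix b b
        (B : EuclideanSpace ℝ (Fin n) →ₗ[ℝ] EuclideanSpace ℝ (Fin n))).diag i|
      ≤ ∑ i : Fin n, |(LinearMap.toMatrix b b
        (B : EuclideanSpace ℝ (Fin n) →ₗ[ℝ] EuclideanSpace ℝ (Fin n))).diag i| :=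
        Finset.abs_sum_le_sum_abs _ _
    _ ≤ ∑ _i : Fin n, ‖B‖ := Finset.sum_le_sum fun i _ => hdiag i
    _ = n * ‖B‖ := by rw [Finset.sum_const, Finset.card_univ, Fintype.card_fin, nsmul_eq_mul]

lemma aux_exists_unit (hn : 1 < n) {T : EuclideanSpace ℝ (Fin n)} (hT : T ≠ 0) :
    ∃ η : EuclideanSpace ℝ (Fin n), ‖η‖ = 1 ∧ (inner ℝ η T : ℝ) = 0 := by
  have hfr : Module.finrank ℝ (EuclideanSpace ℝ (Fin n)) = n := by
    simp [finrank_euclideanSpace_fin]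
  have h1 := Submodule.finrank_add_finrank_orthogonal (K := (ℝ ∙ T))
  rw [finrank_span_singleton hT] at h1
  have h2 : 0 < Module.finrank ℝ ((ℝ ∙ T)ᗮ : Submodule ℝ (EuclideanSpace ℝ (Fin n))) := by
    omega
  have hne : ((ℝ ∙ T)ᗮ : Submodule ℝ (EuclideanSpace ℝ (Fin n))) ≠ ⊥ := by
    intro hbot
    rw [hbot] at h2
    simp at h2
  obtain ⟨v, hv, hvne⟩ := Submodule.exists_mem_ne_zero_of_ne_bot hne
  refine ⟨‖v‖⁻¹ • v, norm_smul_inv_norm hvne, ?_⟩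
  rw [real_inner_smul_left]
  have : (inner ℝ T v : ℝ) = 0 := (Submodule.mem_orthogonal _ v).mp hv T
    (Submodule.mem_span_singleton_self T)
  rw [real_inner_comm] at this
  rw [this, mul_zero]

end LinAlg

set_option maxHeartbeats 1000000 in
set_option synthInstance.maxHeartbeats 400000 in
/-- Limits (2.31) and (2.33): `sup{|n−1−div ṽ(x)| : x ∈ T̃_ε(Γ̃)} → 0` and
`sup{dṽ(x)[η]·η : x ∈ T̃_ε(Γ̃), |η| = 1} → 1` as `ε → 0⁺`. -/
theorem limits_of_divergence_and_quadratic_form_circuit (n : ℕ) (hn : 3 ≤ n)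
    (a b : ℝ) (hab : a < b)
    (γ : ℝ → Euc n) (hγ : ContDiffOn ℝ 3 γ (Set.Icc a b))
    (hγ' : ∀ t ∈ Set.Icc a b, curveDeriv γ a b t ≠ 0)
    (hclose : γ a = γ b) (hclose' : curveDeriv γ a b a = curveDeriv γ a b b)
    (hγinj : Set.InjOn γ (Set.Ico a b))
    (εbar₁ : ℝ) (hεbar₁ : 0 < εbar₁) (pnear : Euc n → Euc n)
    (hpΓ : ∀ x ∈ distTube (γ '' Set.Icc a b) εbar₁, pnear x ∈ γ '' Set.Icc a b)
    (hpdist : ∀ x ∈ distTube (γ '' Set.Icc a b) εbar₁,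
      dist x (pnear x) = infDist x (γ '' Set.Icc a b))
    (hpuniq : ∀ x ∈ distTube (γ '' Set.Icc a b) εbar₁, ∀ y ∈ γ '' Set.Icc a b,
      dist x y = infDist x (γ '' Set.Icc a b) → y = pnear x)
    (ε' : ℝ) (hε' : ε' ∈ Set.Ioo 0 εbar₁)
    (hC1 : ContDiffOn ℝ 1 (fun x => x - pnear x)
      (closure (distTube (γ '' Set.Icc a b) ε'))) :
    ∀ δ > 0, ∃ ε₀ > 0, ∀ ε : ℝ, 0 < ε → ε < ε₀ →
      (∀ x ∈ distTube (γ '' Set.Icc a b) ε,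
        |(n : ℝ) - 1 - LinearMap.trace ℝ (Euc n)
          (fderiv ℝ (fun y => y - pnear y) x : Euc n →ₗ[ℝ] Euc n)| < δ) ∧
      (∀ x ∈ distTube (γ '' Set.Icc a b) ε, ∀ η : Euc n, ‖η‖ = 1 →
        (inner ℝ (fderiv ℝ (fun y => y - pnear y) x η) η : ℝ) < 1 + δ) ∧
      (∃ x ∈ distTube (γ '' Set.Icc a b) ε, ∃ η : Euc n, ‖η‖ = 1 ∧
        1 - δ < (inner ℝ (fderiv ℝ (fun y => y - pnear y) x η) η : ℝ)) := by
  intro δ hδ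
  classical
  obtain ⟨hε'pos, hε'lt⟩ := hε'
  set Γ : Set (Euc n) := γ '' Set.Icc a b with hΓdef
  set v : Euc n → Euc n := fun y => y - pnear y with hvdef
  set g : ℝ → Euc n := fun t => derivWithin γ (Set.Icc a b) t with hgdef
  have hg0 : ∀ t ∈ Set.Icc a b, g t ≠ 0 := fun t ht => hγ' t ht
  have hgclose : g a = g b := hclose'
  have hΓne : Γ.Nonempty := ⟨γ a, a, ⟨le_rfl, hab.le⟩, rfl⟩
  have hΓcomp : IsCompact Γ := isCompact_Icc.image_of_continuousOn hγ.continuousOn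
  set U : Set (Euc n) := distTube Γ ε' with hUdef
  have hUopen : IsOpen U := isOpen_lt (continuous_infDist_pt Γ) continuous_const
  have hC1U : ContDiffOn ℝ 1 v U := hC1.mono subset_closure
  have hΓtube : ∀ ε : ℝ, 0 < ε → ∀ y ∈ Γ, y ∈ distTube Γ ε := by
    intro ε hε y hy
    show infDist y Γ < ε
    rw [infDist_zero_of_mem hy]; exact hε
  have hΓU : Γ ⊆ U := fun y hy => hΓtube ε' hε'pos y hy
  have hdiffat : ∀ x ∈ U, DifferentiableAt ℝ v x := fun x hx =>
    (hC1U.differentiableOn one_ne_zero x hx).differentiableAt (hUopen.mem_nhds hx)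
  have hfcont : ContinuousOn (fun x => fderiv ℝ v x) U :=
    hC1U.continuousOn_fderiv_of_isOpen hUopen le_rfl
  have hudiff : UniqueDiffOn ℝ (Set.Icc a b) := uniqueDiffOn_Icc hab
  -- the derivative of v on Γ is the normal projection
  have hDΓ : ∀ t ∈ Set.Icc a b, fderiv ℝ v (γ t) = projA (‖g t‖⁻¹ • g t) := by
    intro t ht
    have hγtΓ : γ t ∈ Γ := ⟨t, ht, rfl⟩
    have hdy : DifferentiableAt ℝ v (γ t) := hdiffat _ (hΓU hγtΓ)
    apply aux_proj (hg0 t ht)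
    · -- tangent direction
      have hγd : HasDerivWithinAt γ (g t) (Set.Icc a b) t :=
        ((hγ.differentiableOn (by norm_num)) t ht).hasDerivWithinAt
      have hcomp : HasDerivWithinAt (v ∘ γ) (fderiv ℝ v (γ t) (g t)) (Set.Icc a b) t :=
        hdy.hasFDerivAt.comp_hasDerivWithinAt t hγd
      have hvγ : ∀ u ∈ Set.Icc a b, v (γ u) = 0 := by
        intro u hu
        have huΓ : γ u ∈ Γ := ⟨u, hu, rfl⟩
        have := hpuniq (γ u) (hΓtube εbar₁ hεbar₁ _ huΓ) (γ u) huΓ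
          (by rw [dist_self, infDist_zero_of_mem huΓ])
        show γ u - pnear (γ u) = 0
        rw [← this, sub_self]
      have hzero : HasDerivWithinAt (fun _ : ℝ => (0 : Euc n))
          (fderiv ℝ v (γ t) (g t)) (Set.Icc a b) t :=
        hcomp.congr (fun u hu => (hvγ u hu).symm) (hvγ t ht).symm
      have h1 := hzero.derivWithin (hudiff t ht)
      have h2 := (hasDerivWithinAt_const t (Set.Icc a b) (0 : Euc n)).derivWithin (hudiff t ht)
      rw [← h1, h2]
    · -- normal directions
      intro η hη
      obtain ⟨s₀, hs₀pos, hfoot⟩ := aux_foot hab hγ hg0 hclose hgclose hγinj hεbar₁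
        hpΓ hpdist ht hη
      have hc0 : γ t + (0:ℝ) • η = γ t := by simp
      have hline : HasDerivAt (fun s : ℝ => γ t + s • η) η 0 := by
        simpa using ((hasDerivAt_id (0:ℝ)).smul_const η).const_add (γ t)
      have hdy' : HasFDerivAt v (fderiv ℝ v (γ t)) ((fun s : ℝ => γ t + s • η) 0) := by
        rw [show (fun s : ℝ => γ t + s • η) 0 = γ t from hc0]
        exact hdy.hasFDerivAt
      have hvc : HasDerivAt (v ∘ fun s : ℝ => γ t + s • η) (fderiv ℝ v (γ t) η) 0 :=
        hdy'.comp_hasDerivAt 0 hline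
      have heven : (v ∘ fun s : ℝ => γ t + s • η) =ᶠ[nhds (0:ℝ)] (fun s => s • η) := by
        filter_upwards [eventually_abs_sub_lt 0 hs₀pos] with s hs
        have hs' : |s| < s₀ := by simpa using hs
        show v (γ t + s • η) = s • η
        have hfs := hfoot s hs'
        show (γ t + s • η) - pnear (γ t + s • η) = s • η
        rw [hfs]; abel
      have huniq : HasDerivAt (fun s : ℝ => s • η) (fderiv ℝ v (γ t) η) 0 :=
        heven.symm.hasDerivAt_iff.mpr hvc
      have hid : HasDerivAt (fun s : ℝ => s • η) η 0 := by
        simpa using (hasDerivAt_id (0:ℝ)).smul_const η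
      exact huniq.unique hid
  -- compactness and uniform continuity
  set K := closure (distTube Γ (ε'/2)) with hKdef
  have htubebd : Bornology.IsBounded (distTube Γ (ε'/2)) := by
    have hsub : distTube Γ (ε'/2) ⊆ Metric.cthickening (ε'/2) Γ := by
      intro x hx
      have hx' : infDist x Γ < ε'/2 := hx
      obtain ⟨y, hyΓ, hxy⟩ := (infDist_lt_iff hΓne).mp hx'
      exact Metric.thickening_subset_cthickening _ _
        (Metric.mem_thickening_iff.mpr ⟨y, hyΓ, hxy⟩)
    exact (hΓcomp.isBounded.cthickening).subset hsub
  have hKcomp : IsCompact K := htubebd.isCompact_closure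
  have hKU : K ⊆ U := by
    have h1 : distTube Γ (ε'/2) ⊆ {x : Euc n | infDist x Γ ≤ ε'/2} :=
      fun x hx => show infDist x Γ ≤ ε'/2 from le_of_lt hx
    have h2 : IsClosed {x : Euc n | infDist x Γ ≤ ε'/2} :=
      isClosed_le (continuous_infDist_pt Γ) continuous_const
    intro x hx
    have h3 := closure_minimal h1 h2 hx
    show infDist x Γ < ε'
    have : infDist x Γ ≤ ε'/2 := h3
    linarith
  have hucont := hKcomp.uniformContinuousOn_of_continuous (hfcont.mono hKU)
  rw [Metric.uniformContinuousOn_iff] at hucont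
  set r := δ / (n + 1) with hrdef
  have hrpos : 0 < r := by positivity
  obtain ⟨d, hdpos, hd⟩ := hucont r hrpos
  refine ⟨min d (ε'/2), lt_min hdpos (by linarith), fun ε hεpos hεlt => ?_⟩
  have hεd : ε < d := lt_of_lt_of_le hεlt (min_le_left _ _)
  have hεhalf : ε < ε'/2 := lt_of_lt_of_le hεlt (min_le_right _ _)
  -- for every x in the ε-tube, the derivative is r-close to a projection on Γ
  have hclose2 : ∀ x ∈ distTube Γ ε, ∃ t ∈ Set.Icc a b,
      pnear x = γ t ∧ ‖fderiv ℝ v x - fderiv ℝ v (γ t)‖ < r := by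
    intro x hx
    have hx' : infDist x Γ < ε := hx
    have hxbar : x ∈ distTube Γ εbar₁ := by
      show infDist x Γ < εbar₁
      linarith
    obtain ⟨t, ht, hteq⟩ := hpΓ x hxbar
    have hdistxy : dist x (pnear x) < d := by
      rw [hpdist x hxbar]; linarith
    have hxK : x ∈ K := subset_closure (show infDist x Γ < ε'/2 by linarith)
    have hyK : pnear x ∈ K :=
      subset_closure (hΓtube (ε'/2) (by linarith) _ (hpΓ x hxbar))
    have hdd := hd x hxK (pnear x) hyK hdistxy
    rw [dist_eq_norm] at hdd
    refine ⟨t, ht, hteq.symm, ?_⟩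
    rw [hteq]
    exact hdd
  have hrδ : (n : ℝ) * r < δ := by
    rw [hrdef]
    rw [div_eq_mul_inv]
    have hpos : (0:ℝ) < (n:ℝ) + 1 := by positivity
    rw [show (n:ℝ) * (δ * ((n:ℝ)+1)⁻¹) = ((n:ℝ) * δ) / ((n:ℝ)+1) by ring]
    rw [div_lt_iff₀ hpos]
    nlinarith
  have hrδ' : r ≤ δ := by
    rw [hrdef]
    rw [div_le_iff₀ (by positivity : (0:ℝ) < (n:ℝ)+1)]
    nlinarith
  refine ⟨?_, ?_, ?_⟩
  · -- trace estimate
    intro x hx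
    obtain ⟨t, ht, hpx, hnormlt⟩ := hclose2 x hx
    have htr : LinearMap.trace ℝ (Euc n)
        (fderiv ℝ v (γ t) : Euc n →ₗ[ℝ] Euc n) = n - 1 := by
      rw [hDΓ t ht]
      exact aux_traceA (norm_smul_inv_norm (𝕜 := ℝ) (hg0 t ht))
    have hbd := aux_trace_bound (fderiv ℝ v (γ t) - fderiv ℝ v x)
    have hcoe : ((fderiv ℝ v (γ t) - fderiv ℝ v x : Euc n →L[ℝ] Euc n) :
        Euc n →ₗ[ℝ] Euc n)
        = (fderiv ℝ v (γ t) : Euc n →ₗ[ℝ] Euc n) - (fderiv ℝ v x : Euc n →ₗ[ℝ] Euc n) := rfl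
    rw [hcoe, map_sub, htr] at hbd
    have hnorm2 : ‖fderiv ℝ v (γ t) - fderiv ℝ v x‖ < r := by
      rw [norm_sub_rev]; exact hnormlt
    have hq : |(n:ℝ) - 1 - LinearMap.trace ℝ (Euc n) (fderiv ℝ v x : Euc n →ₗ[ℝ] Euc n)|
        ≤ (n:ℝ) * ‖fderiv ℝ v (γ t) - fderiv ℝ v x‖ := hbd
    have : (n:ℝ) * ‖fderiv ℝ v (γ t) - fderiv ℝ v x‖ ≤ (n:ℝ) * r :=
      mul_le_mul_of_nonneg_left hnorm2.le (by positivity)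
    calc |(n:ℝ) - 1 - LinearMap.trace ℝ (Euc n) (fderiv ℝ v x : Euc n →ₗ[ℝ] Euc n)|
        ≤ (n:ℝ) * ‖fderiv ℝ v (γ t) - fderiv ℝ v x‖ := hq
      _ ≤ (n:ℝ) * r := this
      _ < δ := hrδ
  · -- quadratic form upper bound
    intro x hx η hη1
    obtain ⟨t, ht, hpx, hnormlt⟩ := hclose2 x hx
    have hqy : (inner ℝ (fderiv ℝ v (γ t) η) η : ℝ) ≤ 1 := by
      rw [hDΓ t ht, aux_quadA, hη1]
      nlinarith [sq_nonneg (inner ℝ (‖g t‖⁻¹ • g t) η : ℝ)]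
    have hsplit : (inner ℝ (fderiv ℝ v x η) η : ℝ)
        = (inner ℝ (fderiv ℝ v (γ t) η) η : ℝ)
          + (inner ℝ ((fderiv ℝ v x - fderiv ℝ v (γ t)) η) η : ℝ) := by
      rw [ContinuousLinearMap.sub_apply, inner_sub_left]
      ring
    have hb : (inner ℝ ((fderiv ℝ v x - fderiv ℝ v (γ t)) η) η : ℝ)
        ≤ ‖(fderiv ℝ v x - fderiv ℝ v (γ t)) η‖ * ‖η‖ := real_inner_le_norm _ _
    have hb2 : ‖(fderiv ℝ v x - fderiv ℝ v (γ t)) η‖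
        ≤ ‖fderiv ℝ v x - fderiv ℝ v (γ t)‖ * ‖η‖ :=
      ContinuousLinearMap.le_opNorm _ _
    rw [hη1] at hb hb2
    have : (inner ℝ ((fderiv ℝ v x - fderiv ℝ v (γ t)) η) η : ℝ) < r := by
      calc (inner ℝ ((fderiv ℝ v x - fderiv ℝ v (γ t)) η) η : ℝ)
          ≤ ‖(fderiv ℝ v x - fderiv ℝ v (γ t)) η‖ * 1 := hb
        _ = ‖(fderiv ℝ v x - fderiv ℝ v (γ t)) η‖ := mul_one _
        _ ≤ ‖fderiv ℝ v x - fderiv ℝ v (γ t)‖ := by simpa using hb2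
        _ < r := hnormlt
    linarith [hsplit, hqy, this, hrδ']
  · -- quadratic form is close to 1 somewhere
    have hamem : a ∈ Set.Icc a b := ⟨le_rfl, hab.le⟩
    have haΓ : γ a ∈ Γ := ⟨a, hamem, rfl⟩
    obtain ⟨η, hη1, hηperp⟩ := aux_exists_unit (by omega) (hg0 a hamem)
    refine ⟨γ a, hΓtube ε hεpos _ haΓ, η, hη1, ?_⟩
    have : (inner ℝ (fderiv ℝ v (γ a) η) η : ℝ) = 1 := by
      rw [hDΓ a hamem, aux_quadA, hη1]
      have hip : (inner ℝ (‖g a‖⁻¹ • g a) η : ℝ) = 0 := by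
        rw [real_inner_smul_left, real_inner_comm, hηperp, mul_zero]
      rw [hip]
      norm_num
    rw [this]
    linarith

end
end

section
/- Let 1 ≤ k < n, let M be a compact smooth k-dimensional manifold without boundary and φ : M → ℝⁿ a smooth topological embedding whose differential is injective at every point, and set Γ_k = φ(M). Let ε̄₁ > 0 be such that the normal disks x + N_{ε̄₁}(x), x ∈ Γ_k, are pairwise disjoint; for z ∈ T_{ε̄₁}(Γ_k) let p_k(z) denote the unique x ∈ Γ_k with z ∈ x + N_{ε̄₁}(x), set v_k(z) = z − p_k(z), and assume v_k is C¹ on the closure of T_{ε'}(Γ_k) for some ε' ∈ (0, ε̄₁). Then lim_{ε→0⁺} sup{|n − k − div v_k(z)| : z ∈ T_ε(Γ_k)} = 0 and lim_{ε→0⁺} sup{dv_k(z)[η]·η : z ∈ T_ε(Γ_k), η ∈ ℝⁿ, |η| = 1} = 1, where dv_k(z) denotes the (Fréchet) derivative of v_k at z and div v_k its trace. -/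
open Metric Set Manifold

noncomputable section

section ManifoldDefs

variable (k : ℕ) {n : ℕ} {M : Type*} [TopologicalSpace M]
  [ChartedSpace (EuclideanSpace ℝ (Fin k)) M]

/-- The tangent space to `Γ_k = φ(M)` at `φ y`, as a submodule of `ℝⁿ`: the range of the
differential of `φ` at `y`. -/
def tangentRange (φ : M → Euc n) (y : M) : Submodule ℝ (Euc n) :=
  LinearMap.range (mfderiv (𝓡 k) 𝓘(ℝ, Euc n) φ y).toLinearMap

/-- The tubular neighbourhood `T_ε(Γ_k) = ⋃_{x ∈ Γ_k} (x + N_ε(x))`, where `N_ε(x)` is the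
open normal `ε`-disk at `x`. -/
def tubeManifold (φ : M → Euc n) (ε : ℝ) : Set (Euc n) :=
  {z | ∃ y : M, ∃ ξ ∈ (tangentRange k φ y)ᗮ, ‖ξ‖ < ε ∧ z = φ y + ξ}

end ManifoldDefs

/-! ### Auxiliary lemmas -/

section InnerHelpers

variable {n : ℕ}

lemma aux_trace_eq_sum_inner {ι : Type*} [Fintype ι] [DecidableEq ι]
    (b : OrthonormalBasis ι ℝ (Euc n)) (A : Euc n →ₗ[ℝ] Euc n) :
    LinearMap.trace ℝ (Euc n) A = ∑ i, (inner ℝ (b i) (A (b i)) : ℝ) := by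
  rw [LinearMap.trace_eq_matrix_trace ℝ b.toBasis, Matrix.trace]
  congr 1
  ext i
  rw [Matrix.diag_apply, LinearMap.toMatrix_apply, OrthonormalBasis.coe_toBasis,
    OrthonormalBasis.coe_toBasis_repr_apply, OrthonormalBasis.repr_apply_apply]

lemma aux_trace_proj (N : Submodule ℝ (Euc n)) :
    LinearMap.trace ℝ (Euc n)
      ((N.subtypeL.comp (Submodule.orthogonalProjectionOnto N) : Euc n →L[ℝ] Euc n) : Euc n →ₗ[ℝ] Euc n)
      = (Module.finrank ℝ N : ℝ) := by
  have h : LinearMap.IsProj N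
      ((N.subtypeL.comp (Submodule.orthogonalProjectionOnto N) : Euc n →L[ℝ] Euc n) : Euc n →ₗ[ℝ] Euc n) := by
    constructor
    · intro x; exact (Submodule.orthogonalProjectionOnto N x).2
    · intro x hx; simp [Submodule.orthogonalProjectionOnto_mem_subspace_eq_self ⟨x, hx⟩]
  exact h.trace

lemma aux_trace_sub_bound (A B : Euc n →L[ℝ] Euc n) :
    |LinearMap.trace ℝ (Euc n) (A : Euc n →ₗ[ℝ] Euc n)
      - LinearMap.trace ℝ (Euc n) (B : Euc n →ₗ[ℝ] Euc n)| ≤ n * ‖A - B‖ := by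
  classical
  set b := EuclideanSpace.basisFun (Fin n) ℝ with hb
  have h1 : LinearMap.trace ℝ (Euc n) (A : Euc n →ₗ[ℝ] Euc n)
      - LinearMap.trace ℝ (Euc n) (B : Euc n →ₗ[ℝ] Euc n)
      = ∑ i, (inner ℝ (b i) ((A - B) (b i)) : ℝ) := by
    rw [aux_trace_eq_sum_inner b (A : Euc n →ₗ[ℝ] Euc n),
      aux_trace_eq_sum_inner b (B : Euc n →ₗ[ℝ] Euc n), ← Finset.sum_sub_distrib]
    congr 1; ext i
    rw [← inner_sub_right]
    congr 1
  rw [h1]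
  calc |∑ i, (inner ℝ (b i) ((A - B) (b i)) : ℝ)|
      ≤ ∑ i, |(inner ℝ (b i) ((A - B) (b i)) : ℝ)| := Finset.abs_sum_le_sum_abs _ _
    _ ≤ ∑ _i : Fin n, ‖A - B‖ := by
        apply Finset.sum_le_sum
        intro i _
        calc |(inner ℝ (b i) ((A - B) (b i)) : ℝ)| ≤ ‖b i‖ * ‖(A - B) (b i)‖ :=
              abs_real_inner_le_norm _ _
          _ ≤ ‖b i‖ * (‖A - B‖ * ‖b i‖) := by
              gcongr
              exact (A - B).le_opNorm _
          _ = ‖A - B‖ := by rw [b.orthonormal.1 i]; ring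
    _ = n * ‖A - B‖ := by rw [Finset.sum_const, Finset.card_univ, Fintype.card_fin,
          nsmul_eq_mul]

lemma aux_inner_proj_eq (N : Submodule ℝ (Euc n)) (η : Euc n) :
    (inner ℝ ((N.subtypeL.comp (Submodule.orthogonalProjectionOnto N)) η) η : ℝ)
      = ‖(Submodule.orthogonalProjectionOnto N η : Euc n)‖^2 := by
  have h0 : (inner ℝ (η - (Submodule.orthogonalProjectionOnto N η : Euc n))
      (Submodule.orthogonalProjectionOnto N η : Euc n) : ℝ) = 0 :=
    Submodule.starProjection_inner_eq_zero η _ (Submodule.orthogonalProjectionOnto N η).2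
  have h0' : (inner ℝ ((Submodule.orthogonalProjectionOnto N η : Euc n))
      (η - (Submodule.orthogonalProjectionOnto N η : Euc n)) : ℝ) = 0 := by
    rw [real_inner_comm]; exact h0
  have h1 : (inner ℝ ((Submodule.orthogonalProjectionOnto N η : Euc n)) η : ℝ)
      = inner ℝ ((Submodule.orthogonalProjectionOnto N η : Euc n)) (Submodule.orthogonalProjectionOnto N η : Euc n)
        + (inner ℝ ((Submodule.orthogonalProjectionOnto N η : Euc n))
            (η - (Submodule.orthogonalProjectionOnto N η : Euc n)) : ℝ) := by
    rw [← inner_add_right]; congr 1; abel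
  simp only [ContinuousLinearMap.comp_apply, Submodule.subtypeL_apply]
  rw [h1, h0', add_zero, real_inner_self_eq_norm_sq]

lemma aux_inner_proj_le_one (N : Submodule ℝ (Euc n)) (η : Euc n) (hη : ‖η‖ = 1) :
    (inner ℝ ((N.subtypeL.comp (Submodule.orthogonalProjectionOnto N)) η) η : ℝ) ≤ 1 := by
  rw [aux_inner_proj_eq]
  have h2 : ‖(Submodule.orthogonalProjectionOnto N η : Euc n)‖ ≤ 1 := by
    calc ‖(Submodule.orthogonalProjectionOnto N η : Euc n)‖ ≤ ‖Submodule.orthogonalProjectionOnto N‖ * ‖η‖ :=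
          (Submodule.orthogonalProjectionOnto N).le_opNorm η
    _ ≤ 1 := by rw [hη, mul_one]; exact Submodule.orthogonalProjectionOnto_norm_le N
  nlinarith [norm_nonneg (Submodule.orthogonalProjectionOnto N η : Euc n)]

lemma aux_inner_proj_mem (N : Submodule ℝ (Euc n)) (η : Euc n) (hη : ‖η‖ = 1) (hm : η ∈ N) :
    (inner ℝ ((N.subtypeL.comp (Submodule.orthogonalProjectionOnto N)) η) η : ℝ) = 1 := by
  rw [aux_inner_proj_eq, Submodule.orthogonalProjectionOnto_mem_subspace_eq_self ⟨η, hm⟩]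
  simp [hη]

end InnerHelpers

section ManifoldHelpers

variable {k n : ℕ} {M : Type*} [TopologicalSpace M]
  [ChartedSpace (EuclideanSpace ℝ (Fin k)) M] [IsManifold (𝓡 k) ((⊤ : ℕ∞) : WithTop ℕ∞) M]

set_option linter.unusedSectionVars false

lemma aux_chart_hasFDerivAt (φ : M → Euc n) (hφ : ContMDiff (𝓡 k) 𝓘(ℝ, Euc n) (⊤ : ℕ∞) φ) (y₀ : M) :
    HasFDerivAt (fun u => φ ((extChartAt (𝓡 k) y₀).symm u))
      (mfderiv (𝓡 k) 𝓘(ℝ, Euc n) φ y₀ : EuclideanSpace ℝ (Fin k) →L[ℝ] Euc n)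
      (extChartAt (𝓡 k) y₀ y₀) := by
  have h1 : MDifferentiableAt (𝓡 k) 𝓘(ℝ, Euc n) φ y₀ := (hφ y₀).mdifferentiableAt (by simp)
  have h2 := h1.hasMFDerivAt
  rw [HasMFDerivAt] at h2
  obtain ⟨-, h3⟩ := h2
  rw [writtenInExtChartAt] at h3
  simp only [extChartAt_model_space_eq_id, PartialEquiv.refl_coe, Function.comp_def, id_eq,
    ModelWithCorners.range_eq_univ, hasFDerivWithinAt_univ] at h3
  exact hasFDerivWithinAt_univ.mp h3

/-- The tube is exactly the open `ε`-neighbourhood of `Γ = range φ`. -/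
lemma aux_tube_eq [CompactSpace M] [Nonempty M]
    (φ : M → Euc n) (hφ : ContMDiff (𝓡 k) 𝓘(ℝ, Euc n) (⊤ : ℕ∞) φ) (ε : ℝ) :
    tubeManifold k φ ε = {z | Metric.infDist z (Set.range φ) < ε} := by
  have hΓc : IsCompact (Set.range φ) := isCompact_range hφ.continuous
  ext z
  constructor
  · rintro ⟨y, ξ, hξN, hξnorm, rfl⟩
    have h : dist (φ y + ξ) (φ y) = ‖ξ‖ := by rw [dist_eq_norm]; congr 1; abel
    calc Metric.infDist (φ y + ξ) (Set.range φ) ≤ dist (φ y + ξ) (φ y) :=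
          Metric.infDist_le_dist_of_mem (Set.mem_range_self y)
      _ < ε := by rw [h]; exact hξnorm
  · intro hz
    obtain ⟨x, hxΓ, hx⟩ := hΓc.exists_infDist_eq_dist (Set.range_nonempty φ) z
    obtain ⟨y₀, rfl⟩ := hxΓ
    refine ⟨y₀, z - φ y₀, ?_, ?_, by abel⟩
    · set c := extChartAt (𝓡 k) y₀ with hc
      set u₀ := c y₀ with hu₀
      have hsymm : c.symm u₀ = y₀ := (extChartAt (𝓡 k) y₀).left_inv (mem_extChartAt_source y₀)
      set L := mfderiv (𝓡 k) 𝓘(ℝ, Euc n) φ y₀ with hL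
      have hψ : HasFDerivAt (fun u => φ (c.symm u)) L u₀ := aux_chart_hasFDerivAt φ hφ y₀
      have hh : HasFDerivAt (fun u => z - φ (c.symm u)) (-L) u₀ := by
        exact hψ.const_sub z
      have hg : HasFDerivAt (fun u => (inner ℝ (z - φ (c.symm u)) (z - φ (c.symm u)) : ℝ))
          ((fderivInnerCLM ℝ (z - φ (c.symm u₀), z - φ (c.symm u₀))).comp <|
            (-L).prod (-L)) u₀ :=
        hh.inner ℝ hh
      have hmin : IsLocalMin (fun u => (inner ℝ (z - φ (c.symm u)) (z - φ (c.symm u)) : ℝ)) u₀ := by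
        apply Filter.Eventually.of_forall
        intro u
        simp only [real_inner_self_eq_norm_sq, hsymm]
        have h1 : dist z (φ (c.symm u)) ≥ dist z (φ y₀) := by
          rw [← hx]; exact Metric.infDist_le_dist_of_mem (Set.mem_range_self _)
        rw [dist_eq_norm, dist_eq_norm] at h1
        nlinarith [norm_nonneg (z - φ y₀), norm_nonneg (z - φ (c.symm u))]
      have hzero := hmin.hasFDerivAt_eq_zero hg
      rw [Submodule.mem_orthogonal]
      rintro w ⟨u, rfl⟩
      have h3 : (fderivInnerCLM ℝ (z - φ (c.symm u₀), z - φ (c.symm u₀)))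
          (-(L u), -(L u)) = 0 := DFunLike.congr_fun hzero u
      rw [fderivInnerCLM_apply] at h3
      simp only [hsymm, inner_neg_right, inner_neg_left] at h3
      have h2 : (inner ℝ (z - φ y₀) (L u) : ℝ) = 0 := by
        set w : Euc n := L u with hw
        have h3' : inner ℝ (z - φ y₀) (-w) + inner ℝ (-w) (z - φ y₀) = 0 := h3
        rw [inner_neg_right, inner_neg_left] at h3'
        linarith [real_inner_comm (show Euc n from L u) (z - φ y₀), h3]
      rw [real_inner_comm]
      exact h2
    · rw [← dist_eq_norm, ← hx]; exact hz

lemma aux_pk_fiber (φ : M → Euc n) {εbar₁ : ℝ}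
    (hdisj : ∀ y₁ y₂ : M, y₁ ≠ y₂ →
      Disjoint
        ((fun ξ => φ y₁ + ξ) '' {ξ ∈ (tangentRange k φ y₁)ᗮ | ‖ξ‖ < εbar₁})
        ((fun ξ => φ y₂ + ξ) '' {ξ ∈ (tangentRange k φ y₂)ᗮ | ‖ξ‖ < εbar₁}))
    (pk : Euc n → M)
    (hpk : ∀ z ∈ tubeManifold k φ εbar₁,
      (z - φ (pk z)) ∈ (tangentRange k φ (pk z))ᗮ ∧ ‖z - φ (pk z)‖ < εbar₁)
    (y : M) (ξ : Euc n) (hξ : ξ ∈ (tangentRange k φ y)ᗮ) (hξn : ‖ξ‖ < εbar₁) :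
    pk (φ y + ξ) = y := by
  set z := φ y + ξ with hz
  have hzT : z ∈ tubeManifold k φ εbar₁ := ⟨y, ξ, hξ, hξn, rfl⟩
  obtain ⟨h1, h2⟩ := hpk z hzT
  by_contra hne
  exact Set.disjoint_left.mp (hdisj (pk z) y hne)
    ⟨z - φ (pk z), ⟨h1, h2⟩, by simp [hz]⟩ ⟨ξ, ⟨hξ, hξn⟩, rfl⟩

/-- At a point of `Γ`, the derivative of `v = id - φ ∘ pk` is the orthogonal projection
onto the normal space. -/
lemma aux_hasFDerivAt_gamma (φ : M → Euc n) (hφ : ContMDiff (𝓡 k) 𝓘(ℝ, Euc n) (⊤ : ℕ∞) φ)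
    {εbar₁ : ℝ} (hεbar₁ : 0 < εbar₁)
    (hdisj : ∀ y₁ y₂ : M, y₁ ≠ y₂ →
      Disjoint
        ((fun ξ => φ y₁ + ξ) '' {ξ ∈ (tangentRange k φ y₁)ᗮ | ‖ξ‖ < εbar₁})
        ((fun ξ => φ y₂ + ξ) '' {ξ ∈ (tangentRange k φ y₂)ᗮ | ‖ξ‖ < εbar₁}))
    (pk : Euc n → M)
    (hpk : ∀ z ∈ tubeManifold k φ εbar₁,
      (z - φ (pk z)) ∈ (tangentRange k φ (pk z))ᗮ ∧ ‖z - φ (pk z)‖ < εbar₁)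
    (y₀ : M)
    (hdiff : DifferentiableAt ℝ (fun z => z - φ (pk z)) (φ y₀)) :
    HasFDerivAt (fun z => z - φ (pk z))
      (((tangentRange k φ y₀)ᗮ).subtypeL.comp (Submodule.orthogonalProjectionOnto (tangentRange k φ y₀)ᗮ))
      (φ y₀) := by
  set v : Euc n → Euc n := fun z => z - φ (pk z) with hv
  set T := tangentRange k φ y₀ with hT
  set D := fderiv ℝ v (φ y₀) with hD
  have hDf : HasFDerivAt v D (φ y₀) := hdiff.hasFDerivAt
  have hvΓ : ∀ m : M, v (φ m) = 0 := by
    intro m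
    have h := aux_pk_fiber φ hdisj pk hpk m 0 (Submodule.zero_mem _) (by simpa using hεbar₁)
    simp only [add_zero] at h
    simp [hv, h]
  have hDT : ∀ x ∈ T, D x = 0 := by
    rintro x ⟨u, rfl⟩
    have hψ := aux_chart_hasFDerivAt φ hφ y₀
    have hsymm : (extChartAt (𝓡 k) y₀).symm (extChartAt (𝓡 k) y₀ y₀) = y₀ :=
      (extChartAt (𝓡 k) y₀).left_inv (mem_extChartAt_source y₀)
    have hDf' : HasFDerivAt v D (φ ((extChartAt (𝓡 k) y₀).symm (extChartAt (𝓡 k) y₀ y₀))) := by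
      rw [hsymm]; exact hDf
    have hcomp : HasFDerivAt (v ∘ fun u => φ ((extChartAt (𝓡 k) y₀).symm u))
        (D.comp ((mfderiv (𝓡 k) 𝓘(ℝ, Euc n) φ y₀ : EuclideanSpace ℝ (Fin k) →L[ℝ] Euc n)))
        (extChartAt (𝓡 k) y₀ y₀) :=
      HasFDerivAt.comp (g := v) (f := fun u => φ ((extChartAt (𝓡 k) y₀).symm u))
        (extChartAt (𝓡 k) y₀ y₀) hDf' hψ
    have hzero : HasFDerivAt (v ∘ fun u => φ ((extChartAt (𝓡 k) y₀).symm u))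
        (0 : EuclideanSpace ℝ (Fin k) →L[ℝ] Euc n) (extChartAt (𝓡 k) y₀ y₀) := by
      have h : (v ∘ fun u => φ ((extChartAt (𝓡 k) y₀).symm u)) = fun _ => (0 : Euc n) := by
        funext u; exact hvΓ _
      rw [h]; exact hasFDerivAt_const 0 _
    have h := (hzero.unique hcomp).symm
    calc D ((mfderiv (𝓡 k) 𝓘(ℝ, Euc n) φ y₀) u)
        = (D.comp (mfderiv (𝓡 k) 𝓘(ℝ, Euc n) φ y₀)) u := rfl
      _ = 0 := by exact congrArg (fun f : EuclideanSpace ℝ (Fin k) →L[ℝ] Euc n => f u) h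
  have hDN : ∀ ξ ∈ Tᗮ, D ξ = ξ := by
    intro ξ hξ
    have hr : 0 < εbar₁ / (‖ξ‖ + 1) := by positivity
    have hline : HasDerivAt (fun t : ℝ => φ y₀ + t • ξ) ξ 0 := by
      simpa using ((hasDerivAt_id (0:ℝ)).smul_const ξ).const_add (φ y₀)
    have hcomp : HasDerivAt (fun t : ℝ => v (φ y₀ + t • ξ)) (D ξ) 0 := by
      have h0 : HasFDerivAt v D (φ y₀ + (0:ℝ) • ξ) := by simpa using hDf
      exact h0.comp_hasDerivAt (0:ℝ) hline
    have hEq : (fun t : ℝ => v (φ y₀ + t • ξ)) =ᶠ[nhds (0:ℝ)] fun t => t • ξ := by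
      filter_upwards [Metric.ball_mem_nhds (0:ℝ) hr] with t ht
      have htn : ‖t • ξ‖ < εbar₁ := by
        rw [norm_smul]
        rw [Metric.mem_ball, dist_zero_right, Real.norm_eq_abs] at ht
        have h2 : εbar₁ = (εbar₁ / (‖ξ‖ + 1)) * (‖ξ‖ + 1) := by
          field_simp
        rw [Real.norm_eq_abs]
        nlinarith [abs_nonneg t, norm_nonneg ξ]
      have hpkk := aux_pk_fiber φ hdisj pk hpk y₀ (t • ξ) (Submodule.smul_mem _ t hξ) htn
      simp only [hv]
      rw [hpkk]
      abel
    have h := (hcomp.congr_of_eventuallyEq hEq.symm).unique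
      (by simpa using ((hasDerivAt_id (0:ℝ)).smul_const ξ))
    exact h
  have hDP : D = (Tᗮ).subtypeL.comp (Submodule.orthogonalProjectionOnto Tᗮ) := by
    ext x
    have hx : x ∈ T ⊔ Tᗮ := by
      rw [Submodule.sup_orthogonal_of_hasOrthogonalProjection]; trivial
    obtain ⟨t, ht, nn, hnn, rfl⟩ := Submodule.mem_sup.mp hx
    have hPt : Submodule.orthogonalProjectionOnto Tᗮ t = 0 :=
      Submodule.orthogonalProjectionOnto_apply_of_mem_orthogonal
        (Submodule.le_orthogonal_orthogonal T ht)
    have hPn : Submodule.orthogonalProjectionOnto Tᗮ nn = ⟨nn, hnn⟩ :=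
      Submodule.orthogonalProjectionOnto_mem_subspace_eq_self ⟨nn, hnn⟩
    simp only [ContinuousLinearMap.comp_apply, Submodule.subtypeL_apply, map_add, hPt, hPn]
    rw [hDT t ht, hDN nn hnn]
    simp
  exact hDP ▸ hDf

end ManifoldHelpers

/-- Limits (3.5) and (3.6): `sup{|n−k−div v_k(z)| : z ∈ T_ε(Γ_k)} → 0` and
`sup{dv_k(z)[η]·η : z ∈ T_ε(Γ_k), |η| = 1} → 1` as `ε → 0⁺`. -/
theorem limits_of_divergence_and_quadratic_form_submanifold (k n : ℕ) (hk : 1 ≤ k)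
    (hkn : k < n)
    (M : Type*) [TopologicalSpace M] [ChartedSpace (EuclideanSpace ℝ (Fin k)) M]
    [IsManifold (𝓡 k) ((⊤ : ℕ∞) : WithTop ℕ∞) M] [CompactSpace M]
    (φ : M → Euc n) (hφ : ContMDiff (𝓡 k) 𝓘(ℝ, Euc n) (⊤ : ℕ∞) φ)
    (hemb : Topology.IsEmbedding φ)
    (himm : ∀ y : M, Function.Injective (mfderiv (𝓡 k) 𝓘(ℝ, Euc n) φ y))
    (εbar₁ : ℝ) (hεbar₁ : 0 < εbar₁)
    (hdisj : ∀ y₁ y₂ : M, y₁ ≠ y₂ →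
      Disjoint
        ((fun ξ => φ y₁ + ξ) '' {ξ ∈ (tangentRange k φ y₁)ᗮ | ‖ξ‖ < εbar₁})
        ((fun ξ => φ y₂ + ξ) '' {ξ ∈ (tangentRange k φ y₂)ᗮ | ‖ξ‖ < εbar₁}))
    (pk : Euc n → M)
    (hpk : ∀ z ∈ tubeManifold k φ εbar₁,
      (z - φ (pk z)) ∈ (tangentRange k φ (pk z))ᗮ ∧ ‖z - φ (pk z)‖ < εbar₁)
    (ε' : ℝ) (hε' : ε' ∈ Set.Ioo 0 εbar₁)
    (hC1 : ContDiffOn ℝ 1 (fun z => z - φ (pk z)) (closure (tubeManifold k φ ε'))) :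
    ∀ δ > 0, ∃ ε₀ > 0, ∀ ε : ℝ, 0 < ε → ε < ε₀ →
      (∀ z ∈ tubeManifold k φ ε,
        |(n : ℝ) - k - LinearMap.trace ℝ (Euc n)
          (fderiv ℝ (fun y => y - φ (pk y)) z : Euc n →ₗ[ℝ] Euc n)| < δ) ∧
      (∀ z ∈ tubeManifold k φ ε, ∀ η : Euc n, ‖η‖ = 1 →
        (inner ℝ (fderiv ℝ (fun y => y - φ (pk y)) z η) η : ℝ) < 1 + δ) ∧
      (∃ z ∈ tubeManifold k φ ε, ∃ η : Euc n, ‖η‖ = 1 ∧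
        1 - δ < (inner ℝ (fderiv ℝ (fun y => y - φ (pk y)) z η) η : ℝ)) := by
  intro δ hδ
  haveI : Nonempty M := ⟨pk 0⟩
  obtain ⟨hε'0, hε'1⟩ := hε'
  set v : Euc n → Euc n := fun z => z - φ (pk z) with hv
  set Γ := Set.range φ with hΓ
  have hΓc : IsCompact Γ := isCompact_range hφ.continuous
  have htube : ∀ ε : ℝ, tubeManifold k φ ε = {z | Metric.infDist z Γ < ε} :=
    fun ε => aux_tube_eq φ hφ ε
  have hopen : IsOpen (tubeManifold k φ ε') := by
    rw [htube ε']
    exact isOpen_lt (continuous_infDist_pt Γ) continuous_const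
  have hΓsub : ∀ {ε : ℝ}, 0 < ε → ∀ y : M, φ y ∈ tubeManifold k φ ε := by
    intro ε hε y
    exact ⟨y, 0, Submodule.zero_mem _, by simpa using hε, by simp⟩
  have hdiffOn : ∀ z ∈ tubeManifold k φ ε', DifferentiableAt ℝ v z := by
    intro z hz
    exact (hC1.contDiffAt (Filter.mem_of_superset (hopen.mem_nhds hz) subset_closure)).differentiableAt
      one_ne_zero
  set P : M → (Euc n →L[ℝ] Euc n) := fun y =>
    ((tangentRange k φ y)ᗮ).subtypeL.comp (Submodule.orthogonalProjectionOnto (tangentRange k φ y)ᗮ) with hP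
  have hPfderiv : ∀ y : M, fderiv ℝ v (φ y) = P y := fun y =>
    (aux_hasFDerivAt_gamma φ hφ hεbar₁ hdisj pk hpk y (hdiffOn _ (hΓsub hε'0 y))).fderiv
  -- dimensions
  have hdim : ∀ y : M, Module.finrank ℝ ((tangentRange k φ y)ᗮ) = n - k := by
    intro y
    have h1 : Module.finrank ℝ (tangentRange k φ y) = k := by
      rw [tangentRange]
      have hh := LinearMap.finrank_range_of_inj
        (f := ((mfderiv (𝓡 k) 𝓘(ℝ, Euc n) φ y).toLinearMap :
          EuclideanSpace ℝ (Fin k) →ₗ[ℝ] Euc n))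
        (himm y)
      exact hh.trans finrank_euclideanSpace_fin
    have h2 := Submodule.finrank_add_finrank_orthogonal (K := tangentRange k φ y)
    have h3 : Module.finrank ℝ (Euc n) = n := finrank_euclideanSpace_fin
    omega
  have htraceP : ∀ y : M, LinearMap.trace ℝ (Euc n)
      ((P y : Euc n →L[ℝ] Euc n) : Euc n →ₗ[ℝ] Euc n) = (n : ℝ) - k := by
    intro y
    rw [hP]
    rw [aux_trace_proj, hdim y]
    push_cast [Nat.cast_sub hkn.le]
    ring
  -- continuity of the derivative on the open tube
  set F : Euc n → (Euc n →L[ℝ] Euc n) := fun z => fderiv ℝ v z with hF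
  have hFc : ContinuousOn F (tubeManifold k φ ε') :=
    (hC1.mono subset_closure).continuousOn_fderiv_of_isOpen hopen le_rfl
  -- the compact set K₀
  set K₀ := closure (tubeManifold k φ (ε'/2)) with hK₀
  have hK₀sub : K₀ ⊆ tubeManifold k φ ε' := by
    have hcl : K₀ ⊆ {z | Metric.infDist z Γ ≤ ε'/2} := by
      apply closure_minimal
      · rw [htube]
        intro z hz
        simp only [Set.mem_setOf_eq] at hz ⊢
        exact le_of_lt hz
      · exact isClosed_le (continuous_infDist_pt Γ) continuous_const
    rw [htube]
    intro z hz
    have h1 : Metric.infDist z Γ ≤ ε'/2 := hcl hz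
    show Metric.infDist z Γ < ε'
    linarith
  have hK₀cpt : IsCompact K₀ := by
    obtain ⟨R, hR⟩ := hΓc.isBounded.subset_closedBall 0
    have hbb : tubeManifold k φ (ε'/2) ⊆ Metric.closedBall 0 (R + ε') := by
      rintro _ ⟨y, ξ, -, hξn, rfl⟩
      have hy := hR (Set.mem_range_self y)
      rw [Metric.mem_closedBall, dist_zero_right] at hy ⊢
      calc ‖φ y + ξ‖ ≤ ‖φ y‖ + ‖ξ‖ := norm_add_le _ _
        _ ≤ R + ε' := by linarith
    exact (isCompact_closedBall 0 (R + ε')).of_isClosed_subset isClosed_closure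
      (closure_minimal hbb Metric.isClosed_closedBall)
  -- uniform continuity
  have hUC := hK₀cpt.uniformContinuousOn_of_continuous (hFc.mono hK₀sub)
  rw [Metric.uniformContinuousOn_iff] at hUC
  set δ' := δ / (n + 1) with hδ'
  have hδ'pos : 0 < δ' := by positivity
  obtain ⟨r, hr0, hr⟩ := hUC δ' hδ'pos
  refine ⟨min r (ε'/2), by positivity, ?_⟩
  intro ε hε0 hε1
  have hεr : ε < r := lt_of_lt_of_le hε1 (min_le_left _ _)
  have hεhalf : ε < ε'/2 := lt_of_lt_of_le hε1 (min_le_right _ _)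
  -- key estimate
  have key : ∀ z ∈ tubeManifold k φ ε, ∃ y : M, ‖F z - P y‖ < δ' := by
    rintro z ⟨y, ξ, hξ, hξn, rfl⟩
    have hz2 : (φ y + ξ) ∈ tubeManifold k φ (ε'/2) := ⟨y, ξ, hξ, hξn.trans hεhalf, rfl⟩
    have hzK : φ y + ξ ∈ K₀ := subset_closure hz2
    have hyK : φ y ∈ K₀ := subset_closure (hΓsub (by linarith) y)
    have hdist : dist (φ y + ξ) (φ y) < r := by
      have h : dist (φ y + ξ) (φ y) = ‖ξ‖ := by rw [dist_eq_norm]; congr 1; abel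
      rw [h]; exact hξn.trans hεr
    have h := hr _ hzK _ hyK hdist
    rw [dist_eq_norm] at h
    have hPF : F (φ y) = P y := hPfderiv y
    rw [hPF] at h
    exact ⟨y, h⟩
  have hnposR : (0:ℝ) < n + 1 := by positivity
  refine ⟨?_, ?_, ?_⟩
  · -- divergence estimate
    intro z hz
    obtain ⟨y, hy⟩ := key z hz
    have htr := aux_trace_sub_bound (F z) (P y)
    have h2 := htraceP y
    have hb : (n:ℝ) * ‖F z - P y‖ < n * δ' + δ' := by
      have : (n:ℝ) * ‖F z - P y‖ ≤ n * δ' := by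
        apply mul_le_mul_of_nonneg_left hy.le (Nat.cast_nonneg n)
      linarith
    have hfin : (n:ℝ) * δ' + δ' = δ := by
      rw [hδ']; field_simp
    rw [abs_sub_comm] at htr
    calc |(n : ℝ) - k - LinearMap.trace ℝ (Euc n)
          ((F z : Euc n →L[ℝ] Euc n) : Euc n →ₗ[ℝ] Euc n)|
        = |LinearMap.trace ℝ (Euc n) ((P y : Euc n →L[ℝ] Euc n) : Euc n →ₗ[ℝ] Euc n)
            - LinearMap.trace ℝ (Euc n) ((F z : Euc n →L[ℝ] Euc n) : Euc n →ₗ[ℝ] Euc n)| := by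
          rw [h2]
      _ ≤ n * ‖F z - P y‖ := htr
      _ < n * δ' + δ' := hb
      _ = δ := hfin
  · -- quadratic form upper bound
    intro z hz η hη
    obtain ⟨y, hy⟩ := key z hz
    have hsplit : (inner ℝ (F z η) η : ℝ) = inner ℝ ((F z - P y) η) η + (inner ℝ (P y η) η : ℝ) := by
      rw [← inner_add_left]
      congr 1
      simp
    have h1 : (inner ℝ ((F z - P y) η) η : ℝ) ≤ ‖(F z - P y) η‖ * ‖η‖ := real_inner_le_norm _ _
    have h2 : ‖(F z - P y) η‖ ≤ ‖F z - P y‖ * ‖η‖ := (F z - P y).le_opNorm η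
    have h3 : (inner ℝ (P y η) η : ℝ) ≤ 1 := aux_inner_proj_le_one _ η hη
    have hδ'δ : δ' < δ := by
      rw [hδ']
      apply div_lt_self hδ
      have : (1:ℝ) ≤ n := by exact_mod_cast Nat.one_le_iff_ne_zero.mpr (by omega)
      linarith
    rw [hsplit]
    have : ‖(F z - P y) η‖ * ‖η‖ < δ' := by
      rw [hη, mul_one]
      calc ‖(F z - P y) η‖ ≤ ‖F z - P y‖ * ‖η‖ := h2
        _ = ‖F z - P y‖ := by rw [hη, mul_one]
        _ < δ' := hy
    linarith
  · -- quadratic form lower bound attained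
    obtain ⟨y₀⟩ := ‹Nonempty M›
    have hzmem : φ y₀ ∈ tubeManifold k φ ε := hΓsub hε0 y₀
    have hpos : 0 < Module.finrank ℝ ((tangentRange k φ y₀)ᗮ) := by
      rw [hdim y₀]; omega
    haveI hnt : Nontrivial ((tangentRange k φ y₀)ᗮ) := Module.nontrivial_of_finrank_pos hpos
    obtain ⟨x, hx0⟩ := exists_ne (0 : ((tangentRange k φ y₀)ᗮ))
    have hxm : (x : Euc n) ∈ (tangentRange k φ y₀)ᗮ := x.2
    have hx0' : (x : Euc n) ≠ 0 := fun h => hx0 (Subtype.ext h)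
    set η := ‖(x : Euc n)‖⁻¹ • (x : Euc n) with hη
    have hηnorm : ‖η‖ = 1 := norm_smul_inv_norm hx0'
    have hηmem : η ∈ (tangentRange k φ y₀)ᗮ := Submodule.smul_mem _ _ hxm
    refine ⟨φ y₀, hzmem, η, hηnorm, ?_⟩
    have heq : (inner ℝ (F (φ y₀) η) η : ℝ) = 1 := by
      rw [hF]
      show (inner ℝ ((fderiv ℝ v (φ y₀)) η) η : ℝ) = 1
      rw [hPfderiv y₀]
      exact aux_inner_proj_mem _ η hηnorm hηmem
    have : (inner ℝ ((fderiv ℝ v (φ y₀)) η) η : ℝ) = 1 := heq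
    rw [this]
    linarith
end
end
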